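/- arXiv:1606.07208 — 6 statements merged into one kernel-verified Lean document; each statement's English description precedes it below -/
import Mathlib

section
/- Let P be a dynamic path instance, let x ∈ (x_0, x_n] be a sink location, and let r be the largest index with x_r < x. Let P' be the dynamic path instance obtained from P by replacing each capacity c_t for 1 ≤ t ≤ r+1 by c'_t = min_{t ≤ j ≤ r+1} c_j and leaving all other data unchanged. Then Θ_L(P', x) = Θ_L(P, x). -/
/-- A dynamic path instance: `n+1` vertices at strictly increasing coordinates
`x 0 < x 1 < ⋯ < x n`, natural-number weights `w i`, positive integer capacities
`c j` (capacity of the edge from `x (j-1)` to `x j`, for `1 ≤ j ≤ n`), and a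
positive travel time `τ` per unit distance. -/
structure DPath where
  n : ℕ
  x : ℕ → ℝ
  w : ℕ → ℕ
  c : ℕ → ℕ
  τ : ℝ
  hx : ∀ i, i < n → x i < x (i + 1)
  hc : ∀ j, 1 ≤ j → j ≤ n → 0 < c j
  hτ : 0 < τ

/-- `P.W a i = w_a + ⋯ + w_i`. -/
def DPath.W (P : DPath) (a i : ℕ) : ℕ := ∑ j ∈ Finset.Icc a i, P.w j

/-- For a sink at `y` in subpath `P_{a,b}`: the minimum capacity
`min_{i+1 ≤ j ≤ k+1} c_j`, where `k` is the index with `x_k < y ≤ x_{k+1}`;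
the edges `j` with `i+1 ≤ j ≤ k+1` are exactly those with `i+1 ≤ j ≤ b` and
`x (j-1) < y`. -/
noncomputable def DPath.cL (P : DPath) (b : ℕ) (y : ℝ) (i : ℕ) : ℕ :=
  sInf (P.c '' {j | i + 1 ≤ j ∧ j ≤ b ∧ P.x (j - 1) < y})

/-- For a sink at `y` in subpath `P_{a,b}`: the minimum capacity
`min_{k+1 ≤ j ≤ i} c_j`, where `k` is the index with `x_k ≤ y < x_{k+1}`;
the edges `j` with `k+1 ≤ j ≤ i` are exactly those with `a+1 ≤ j ≤ i` and
`y < x j`. -/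
noncomputable def DPath.cR (P : DPath) (a : ℕ) (y : ℝ) (i : ℕ) : ℕ :=
  sInf (P.c '' {j | a + 1 ≤ j ∧ j ≤ i ∧ y < P.x j})

/-- Left evacuation time `Θ_L(P_{a,b}, y)`: the maximum, over indices `i` with
`a ≤ i ≤ b`, `x i < y` and `W_{a,i} ≥ 1`, of
`(y − x_i)·τ + ⌈W_{a,i} / min_{i+1 ≤ j ≤ k+1} c_j⌉ − 1`; it is `0` if no such
index exists. -/
noncomputable def ThetaL (P : DPath) (a b : ℕ) (y : ℝ) : ℝ :=
  sSup (insert 0 {t : ℝ | ∃ i, a ≤ i ∧ i ≤ b ∧ P.x i < y ∧ 1 ≤ P.W a i ∧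
    t = (y - P.x i) * P.τ + (⌈(P.W a i : ℝ) / (P.cL b y i : ℝ)⌉ : ℝ) - 1})

/-- Right evacuation time `Θ_R(P_{a,b}, y)`. -/
noncomputable def ThetaR (P : DPath) (a b : ℕ) (y : ℝ) : ℝ :=
  sSup (insert 0 {t : ℝ | ∃ i, a ≤ i ∧ i ≤ b ∧ y < P.x i ∧ 1 ≤ P.W i b ∧
    t = (P.x i - y) * P.τ + (⌈(P.W i b : ℝ) / (P.cR a y i : ℝ)⌉ : ℝ) - 1})

/-- Evacuation time of subpath `P_{a,b}` to sink `y`. -/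
noncomputable def Theta (P : DPath) (a b : ℕ) (y : ℝ) : ℝ :=
  max (ThetaL P a b y) (ThetaR P a b y)

/-- `Θ¹(P_{a,b})`: minimum 1-sink evacuation time of subpath `P_{a,b}`
over sinks `y ∈ [x_a, x_b]`. -/
noncomputable def Theta1 (P : DPath) (a b : ℕ) : ℝ :=
  sInf (Theta P a b '' Set.Icc (P.x a) (P.x b))

/-- `Θᵏ(P_{a,b})`: minimum over all partitions of `{a, …, b}` into at most `k`
nonempty intervals `[f j, f (j+1) - 1]`, of the maximum over the intervals of
`Θ¹`. -/
noncomputable def ThetaK (P : DPath) (k a b : ℕ) : ℝ :=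
  sInf {t : ℝ | ∃ (m : ℕ) (f : ℕ → ℕ), 1 ≤ m ∧ m ≤ k ∧
    f 0 = a ∧ f m = b + 1 ∧ (∀ j, j < m → f j < f (j + 1)) ∧
    t = ⨆ j : Fin m, Theta1 P (f j.val) (f (j.val + 1) - 1)}

/-- If `P'` is obtained from `P` by replacing each capacity `c_t`,
for `1 ≤ t ≤ r+1`, by `min_{t ≤ j ≤ r+1} c_j` (where `x_r` is the rightmost
vertex strictly to the left of the sink `y`), then the left evacuation time to
`y` is unchanged. -/
theorem stmt0 (P P' : DPath) (y : ℝ) (r : ℕ)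
    (hy0 : P.x 0 < y) (hyn : y ≤ P.x P.n)
    (hr : r ≤ P.n) (hrlt : P.x r < y)
    (hrmax : ∀ i, i ≤ P.n → P.x i < y → i ≤ r)
    (hn : P'.n = P.n) (hx : P'.x = P.x) (hw : P'.w = P.w) (hτ : P'.τ = P.τ)
    (hc1 : ∀ t, 1 ≤ t → t ≤ r + 1 →
      P'.c t = sInf (P.c '' {j | t ≤ j ∧ j ≤ r + 1}))
    (hc2 : ∀ t, r + 1 < t → P'.c t = P.c t) :
    ThetaL P' 0 P'.n y = ThetaL P 0 P.n y := by
  have hmono : ∀ i j : ℕ, i ≤ j → j ≤ P.n → P.x i ≤ P.x j := by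
    intro i j hij hjn
    induction j with
    | zero => simp [Nat.le_zero.mp hij]
    | succ k ih =>
      rcases Nat.lt_or_ge i (k + 1) with h | h
      · have h1 : P.x i ≤ P.x k := ih (Nat.lt_succ_iff.mp h) (by omega)
        have h2 : P.x k < P.x (k + 1) := P.hx k (by omega)
        linarith
      · have : i = k + 1 := le_antisymm hij h
        simp [this]
  have hrn : r < P.n := by
    rcases lt_or_eq_of_le hr with h | h
    · exact h
    · subst h; linarith
  have hsetL : ∀ i : ℕ, i ≤ r →
      {j | i + 1 ≤ j ∧ j ≤ P.n ∧ P.x (j - 1) < y} = Set.Icc (i + 1) (r + 1) := by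
    intro i hi
    ext j
    simp only [Set.mem_setOf_eq, Set.mem_Icc]
    constructor
    · rintro ⟨h1, h2, h3⟩
      have hj1 : j - 1 ≤ P.n := le_trans (Nat.sub_le j 1) h2
      have := hrmax (j - 1) hj1 h3
      omega
    · rintro ⟨h1, h2⟩
      refine ⟨h1, by omega, ?_⟩
      have hjr : j - 1 ≤ r := by omega
      exact lt_of_le_of_lt (hmono (j - 1) r hjr hr) hrlt
  have hcL : ∀ i, i ≤ r → P'.cL P'.n y i = P.cL P.n y i := by
    intro i hi
    unfold DPath.cL
    rw [hn, hx, hsetL i hi]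
    have himg : P'.c '' Set.Icc (i + 1) (r + 1)
        = (fun t => sInf (P.c '' Set.Icc t (r + 1))) '' Set.Icc (i + 1) (r + 1) := by
      apply Set.image_congr
      intro t ht
      simp only [Set.mem_Icc] at ht
      rw [hc1 t (by omega) ht.2]
      congr 1
    rw [himg]
    apply le_antisymm
    · exact Nat.sInf_le ⟨i + 1, by simp [Set.mem_Icc]; omega, rfl⟩
    · have hne : ((fun t => sInf (P.c '' Set.Icc t (r + 1))) ''
          Set.Icc (i + 1) (r + 1)).Nonempty :=
        ⟨_, ⟨i + 1, by simp [Set.mem_Icc]; omega, rfl⟩⟩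
      obtain ⟨t, ht, hteq⟩ := Nat.sInf_mem hne
      simp only [Set.mem_Icc] at ht
      have hne2 : (P.c '' Set.Icc t (r + 1)).Nonempty :=
        ⟨P.c t, ⟨t, by simp [Set.mem_Icc]; omega, rfl⟩⟩
      obtain ⟨j, hj, hjeq⟩ := Nat.sInf_mem hne2
      simp only [Set.mem_Icc] at hj
      calc sInf (P.c '' Set.Icc (i + 1) (r + 1)) ≤ P.c j :=
            Nat.sInf_le ⟨j, by simp [Set.mem_Icc]; omega, rfl⟩
        _ = sInf (P.c '' Set.Icc t (r + 1)) := hjeq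
        _ = _ := hteq
  have hW : ∀ i, P'.W 0 i = P.W 0 i := by
    intro i; unfold DPath.W; rw [hw]
  unfold ThetaL
  congr 1
  ext t
  simp only [Set.mem_insert_iff, Set.mem_setOf_eq]
  refine or_congr Iff.rfl ⟨?_, ?_⟩
  · rintro ⟨i, h0, h1, h2, h3, h4⟩
    rw [hn] at h1
    rw [hx] at h2
    refine ⟨i, h0, h1, h2, by rwa [hW] at h3, ?_⟩
    rw [h4, hx, hτ, hW, hcL i (hrmax i h1 h2)]
  · rintro ⟨i, h0, h1, h2, h3, h4⟩
    refine ⟨i, h0, by rwa [hn], by rwa [hx], by rwa [← hW] at h3, ?_⟩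
    rw [h4, hx, hτ, hW, hcL i (hrmax i h1 h2)]
end

section
/- Let P be a dynamic path instance with n ≥ 1 and w_0 ≥ 1. Then for every index i with 0 ≤ i < n and every x with x_i < x ≤ x_{i+1}, Θ_L(P,x) = Θ_L(P,x_{i+1}) − τ·(x_{i+1} − x). In particular, Θ_L(P,·) is affine with slope τ on each half-open interval (x_i, x_{i+1}] and is left-continuous at every point of (x_0, x_n]. -/
lemma sSup_image_add (S : Set ℝ) (hne : S.Nonempty) (hbdd : BddAbove S) (c : ℝ) :
    sSup ((fun t => t + c) '' S) = sSup S + c := by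
  apply IsLUB.csSup_eq _ (hne.image _)
  have h := isLUB_csSup hne hbdd
  constructor
  · rintro _ ⟨t, ht, rfl⟩; show t + c ≤ sSup S + c; linarith [h.1 ht]
  · intro b hb
    have h2 : sSup S ≤ b - c := by
      apply h.2
      intro t ht
      have := hb (Set.mem_image_of_mem _ ht)
      linarith
    linarith


lemma DPath.x_mono (P : DPath) : ∀ {a b : ℕ}, a < b → b ≤ P.n → P.x a < P.x b := by
  intro a b
  induction b with
  | zero => omega
  | succ m ih =>
    intro hab hb
    rcases Nat.lt_succ_iff_lt_or_eq.mp hab with h | h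
    · exact lt_trans (ih h (by omega)) (P.hx m (by omega))
    · subst h; exact P.hx a (by omega)

def SLset (P : DPath) (y : ℝ) : Set ℝ :=
  {t : ℝ | ∃ i, 0 ≤ i ∧ i ≤ P.n ∧ P.x i < y ∧ 1 ≤ P.W 0 i ∧
    t = (y - P.x i) * P.τ + (⌈(P.W 0 i : ℝ) / (P.cL P.n y i : ℝ)⌉ : ℝ) - 1}

lemma ThetaL_def (P : DPath) (y : ℝ) : ThetaL P 0 P.n y = sSup (insert 0 (SLset P y)) := rfl

lemma SL_bdd (P : DPath) (u : ℝ) : BddAbove (SLset P u) := by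
  apply Set.Finite.bddAbove
  apply Set.Finite.subset ((Set.finite_Iic P.n).image
    (fun i => (u - P.x i) * P.τ + (⌈(P.W 0 i : ℝ) / (P.cL P.n u i : ℝ)⌉ : ℝ) - 1))
  rintro t ⟨i', -, h2, -, -, rfl⟩
  exact ⟨i', h2, rfl⟩

lemma SL_mem0 (P : DPath) (hn : 1 ≤ P.n) (hw : 1 ≤ P.w 0) (u : ℝ) (hx0 : P.x 0 < u) :
    ∃ t ∈ SLset P u, 0 ≤ t := by
  have hW0 : P.W 0 0 = P.w 0 := by simp [DPath.W]
  have hmem : (1 : ℕ) ∈ {j | 0 + 1 ≤ j ∧ j ≤ P.n ∧ P.x (j - 1) < u} := by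
    refine ⟨le_refl 1, hn, by simpa using hx0⟩
  have hcL0 : 1 ≤ P.cL P.n u 0 := by
    have hne : (P.c '' {j | 0 + 1 ≤ j ∧ j ≤ P.n ∧ P.x (j - 1) < u}).Nonempty :=
      ⟨P.c 1, Set.mem_image_of_mem _ hmem⟩
    obtain ⟨j, hj, hje⟩ := Nat.sInf_mem hne
    rw [DPath.cL, ← hje]
    exact P.hc j hj.1 hj.2.1
  refine ⟨_, ⟨0, le_rfl, Nat.zero_le _, hx0, by omega, rfl⟩, ?_⟩
  have hpos : (0:ℝ) < (P.W 0 0 : ℝ) / (P.cL P.n u 0 : ℝ) := by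
    apply div_pos <;> · exact_mod_cast by omega
  have hceil : (1:ℤ) ≤ ⌈(P.W 0 0 : ℝ) / (P.cL P.n u 0 : ℝ)⌉ := Int.ceil_pos.mpr hpos
  have hceil' : (1:ℝ) ≤ (⌈(P.W 0 0 : ℝ) / (P.cL P.n u 0 : ℝ)⌉ : ℝ) := by exact_mod_cast hceil
  have := mul_pos (sub_pos.mpr hx0) P.hτ
  linarith

lemma ThetaL_sSup (P : DPath) (hn : 1 ≤ P.n) (hw : 1 ≤ P.w 0) (u : ℝ) (hx0 : P.x 0 < u) :
    ThetaL P 0 P.n u = sSup (SLset P u) := by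
  obtain ⟨t0, ht0, ht0nn⟩ := SL_mem0 P hn hw u hx0
  rw [ThetaL_def, csSup_insert (SL_bdd P u) ⟨t0, ht0⟩]
  exact max_eq_right (le_trans ht0nn (le_csSup (SL_bdd P u) ht0))

lemma idx_iff (P : DPath) (i : ℕ) (hi : i < P.n) (u : ℝ) (hu1 : P.x i < u)
    (hu2 : u ≤ P.x (i + 1)) : ∀ i', i' ≤ P.n → (P.x i' < u ↔ i' ≤ i) := by
  intro i' hi'
  constructor
  · intro h; by_contra hc; push_neg at hc
    have hle : P.x (i + 1) ≤ P.x i' := by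
      have h2 : i + 1 = i' ∨ i + 1 < i' := by omega
      rcases h2 with he | hl
      · rw [he]
      · exact le_of_lt (P.x_mono hl hi')
    linarith
  · intro h
    have hle : P.x i' ≤ P.x i := by
      rcases eq_or_lt_of_le h with he | hl
      · rw [he]
      · exact le_of_lt (P.x_mono hl (le_of_lt hi))
    linarith

lemma cL_interval (P : DPath) (i : ℕ) (hi : i < P.n) (u : ℝ) (hu1 : P.x i < u)
    (hu2 : u ≤ P.x (i + 1)) (i' : ℕ) :
    P.cL P.n u i' = P.cL P.n (P.x (i + 1)) i' := by
  have e1 := idx_iff P i hi u hu1 hu2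
  have e2 := idx_iff P i hi (P.x (i + 1)) (P.hx i hi) le_rfl
  have hset : {j | i' + 1 ≤ j ∧ j ≤ P.n ∧ P.x (j - 1) < u}
      = {j | i' + 1 ≤ j ∧ j ≤ P.n ∧ P.x (j - 1) < P.x (i + 1)} := by
    ext j
    simp only [Set.mem_setOf_eq]
    constructor
    · rintro ⟨h1, h2, h3⟩
      exact ⟨h1, h2, (e2 (j - 1) (by omega)).mpr ((e1 (j - 1) (by omega)).mp h3)⟩
    · rintro ⟨h1, h2, h3⟩
      exact ⟨h1, h2, (e1 (j - 1) (by omega)).mpr ((e2 (j - 1) (by omega)).mp h3)⟩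
  rw [DPath.cL, DPath.cL, hset]

lemma SL_shift (P : DPath) (i : ℕ) (hi : i < P.n) (u : ℝ) (hu1 : P.x i < u)
    (hu2 : u ≤ P.x (i + 1)) :
    SLset P u = (fun t => t + (u - P.x (i + 1)) * P.τ) '' SLset P (P.x (i + 1)) := by
  have e1 := idx_iff P i hi u hu1 hu2
  have e2 := idx_iff P i hi (P.x (i + 1)) (P.hx i hi) le_rfl
  ext t
  simp only [SLset, Set.mem_setOf_eq, Set.mem_image]
  constructor
  · rintro ⟨i', -, h2, h3, h4, rfl⟩
    refine ⟨(P.x (i + 1) - P.x i') * P.τ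
      + (⌈(P.W 0 i' : ℝ) / (P.cL P.n (P.x (i + 1)) i' : ℝ)⌉ : ℝ) - 1,
      ⟨i', Nat.zero_le _, h2, (e2 i' h2).mpr ((e1 i' h2).mp h3), h4, rfl⟩, ?_⟩
    rw [← cL_interval P i hi u hu1 hu2 i']
    ring
  · rintro ⟨t', ⟨i', -, h2, h3, h4, rfl⟩, rfl⟩
    refine ⟨i', Nat.zero_le _, h2, (e1 i' h2).mpr ((e2 i' h2).mp h3), h4, ?_⟩
    rw [← cL_interval P i hi u hu1 hu2 i']
    ring

lemma thetaL_affine (P : DPath) (hn : 1 ≤ P.n) (hw : 1 ≤ P.w 0) (i : ℕ) (hi : i < P.n)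
    (u : ℝ) (hu1 : P.x i < u) (hu2 : u ≤ P.x (i + 1)) :
    ThetaL P 0 P.n u = ThetaL P 0 P.n (P.x (i + 1)) - P.τ * (P.x (i + 1) - u) := by
  have hx0i : P.x 0 ≤ P.x i := by
    rcases Nat.eq_zero_or_pos i with h | h
    · rw [h]
    · exact le_of_lt (P.x_mono h (le_of_lt hi))
  have hx0u : P.x 0 < u := lt_of_le_of_lt hx0i hu1
  have hx0z : P.x 0 < P.x (i + 1) := P.x_mono (by omega) hi
  obtain ⟨t0, ht0, -⟩ := SL_mem0 P hn hw (P.x (i + 1)) hx0z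
  rw [ThetaL_sSup P hn hw u hx0u, ThetaL_sSup P hn hw (P.x (i + 1)) hx0z,
    SL_shift P i hi u hu1 hu2,
    sSup_image_add _ ⟨t0, ht0⟩ (SL_bdd P (P.x (i + 1)))]
  ring


/-- if `n ≥ 1` and `w_0 ≥ 1` then for every `i < n` and every
`x_i < y ≤ x_{i+1}`, `Θ_L(P,y) = Θ_L(P,x_{i+1}) − τ·(x_{i+1} − y)`; in
particular `Θ_L(P,·)` is affine with slope `τ` on each interval `(x_i, x_{i+1}]`
and left-continuous at every point of `(x_0, x_n]`. -/
theorem stmt2 (P : DPath) (hn : 1 ≤ P.n) (hw : 1 ≤ P.w 0) :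
    (∀ i, i < P.n → ∀ y, P.x i < y → y ≤ P.x (i + 1) →
      ThetaL P 0 P.n y = ThetaL P 0 P.n (P.x (i + 1)) - P.τ * (P.x (i + 1) - y)) ∧
    (∀ y, P.x 0 < y → y ≤ P.x P.n →
      ContinuousWithinAt (ThetaL P 0 P.n) (Set.Iic y) y) := by
  refine ⟨fun i hi y hy1 hy2 => thetaL_affine P hn hw i hi y hy1 hy2, ?_⟩
  intro y hy1 hy2
  -- find i < n with x i < y ≤ x (i+1)
  have hex : ∃ i, i < P.n ∧ P.x i < y ∧ y ≤ P.x (i + 1) := by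
    by_contra hc
    push_neg at hc
    have key : ∀ m, m ≤ P.n → P.x m < y := by
      intro m
      induction m with
      | zero => intro _; exact hy1
      | succ k ih => intro hk; exact hc k (by omega) (ih (by omega))
    have := key P.n le_rfl
    linarith
  obtain ⟨i, hi, hxi, hxi1⟩ := hex
  set f : ℝ → ℝ := fun z => ThetaL P 0 P.n (P.x (i + 1)) - P.τ * (P.x (i + 1) - z) with hf
  have hfc : ContinuousWithinAt f (Set.Iic y) y := by
    apply Continuous.continuousWithinAt
    continuity
  have hmem : Set.Ioc (P.x i) y ∈ nhdsWithin y (Set.Iic y) := by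
    rw [show Set.Ioc (P.x i) y = Set.Ioi (P.x i) ∩ Set.Iic y from (Set.Ioi_inter_Iic).symm]
    exact Filter.inter_mem (mem_nhdsWithin_of_mem_nhds (Ioi_mem_nhds hxi)) self_mem_nhdsWithin
  have heq : ∀ z ∈ Set.Ioc (P.x i) y, ThetaL P 0 P.n z = f z := by
    intro z hz
    exact thetaL_affine P hn hw i hi z hz.1 (le_trans hz.2 hxi1)
  have hy : ThetaL P 0 P.n y = f y := heq y ⟨hxi, le_rfl⟩
  have : ContinuousWithinAt (ThetaL P 0 P.n) (Set.Ioc (P.x i) y) y := by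
    apply (hfc.mono Set.Ioc_subset_Iic_self).congr heq hy
  exact this.mono_of_mem_nhdsWithin hmem
end

section
/- Let P be a dynamic path instance with n ≥ 1. If w_0 ≥ 1, then x ↦ Θ_L(P,x) is strictly increasing on [x_0, x_n]; if w_n ≥ 1, then x ↦ Θ_R(P,x) is strictly decreasing on [x_0, x_n]. -/
section Aux

variable (P : DPath)

/-- Strict monotonicity of coordinates. -/
lemma DPath.x_lt {P : DPath} {i j : ℕ} (hij : i < j) (hj : j ≤ P.n) :
    P.x i < P.x j := by
  induction j with
  | zero => omega
  | succ k ih =>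
    rcases Nat.lt_succ_iff_lt_or_eq.mp hij with h | h
    · exact (ih h (by omega)).trans (P.hx k (by omega))
    · subst h; exact P.hx i (by omega)

lemma setL_finite (P : DPath) (a b : ℕ) (y : ℝ) :
    {t : ℝ | ∃ i, a ≤ i ∧ i ≤ b ∧ P.x i < y ∧ 1 ≤ P.W a i ∧
      t = (y - P.x i) * P.τ + (⌈(P.W a i : ℝ) / (P.cL b y i : ℝ)⌉ : ℝ) - 1}.Finite := by
  apply Set.Finite.subset ((Set.finite_Iic b).image
    (fun i => (y - P.x i) * P.τ + (⌈(P.W a i : ℝ) / (P.cL b y i : ℝ)⌉ : ℝ) - 1))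
  rintro t ⟨i, _, hib, _, _, ht⟩
  exact ⟨i, hib, ht.symm⟩

lemma setR_finite (P : DPath) (a b : ℕ) (y : ℝ) :
    {t : ℝ | ∃ i, a ≤ i ∧ i ≤ b ∧ y < P.x i ∧ 1 ≤ P.W i b ∧
      t = (P.x i - y) * P.τ + (⌈(P.W i b : ℝ) / (P.cR a y i : ℝ)⌉ : ℝ) - 1}.Finite := by
  apply Set.Finite.subset ((Set.finite_Iic b).image
    (fun i => (P.x i - y) * P.τ + (⌈(P.W i b : ℝ) / (P.cR a y i : ℝ)⌉ : ℝ) - 1))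
  rintro t ⟨i, _, hib, _, _, ht⟩
  exact ⟨i, hib, ht.symm⟩

lemma cL_mem {P : DPath} {y : ℝ} {i : ℕ} (hin : i + 1 ≤ P.n) (hxy : P.x i < y) :
    P.cL P.n y i ∈ P.c '' {j | i + 1 ≤ j ∧ j ≤ P.n ∧ P.x (j - 1) < y} := by
  apply Nat.sInf_mem
  exact ⟨P.c (i + 1), ⟨i + 1, ⟨le_rfl, hin, by simpa using hxy⟩, rfl⟩⟩

lemma cL_pos {P : DPath} {y : ℝ} {i : ℕ} (hin : i + 1 ≤ P.n) (hxy : P.x i < y) :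
    1 ≤ P.cL P.n y i := by
  obtain ⟨j, ⟨hj1, hj2, _⟩, hje⟩ := cL_mem hin hxy
  rw [← hje]
  exact P.hc j (by omega) hj2

lemma cL_anti {P : DPath} {y₁ y₂ : ℝ} (h : y₁ ≤ y₂) {i : ℕ} (hin : i + 1 ≤ P.n)
    (hxy : P.x i < y₁) : P.cL P.n y₂ i ≤ P.cL P.n y₁ i := by
  apply Nat.sInf_le
  obtain ⟨j, ⟨hj1, hj2, hj3⟩, hje⟩ := cL_mem hin hxy
  exact ⟨j, ⟨hj1, hj2, lt_of_lt_of_le hj3 h⟩, hje⟩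

lemma cR_mem {P : DPath} {y : ℝ} {i : ℕ} (hi1 : 1 ≤ i) (hxy : y < P.x i) :
    P.cR 0 y i ∈ P.c '' {j | 0 + 1 ≤ j ∧ j ≤ i ∧ y < P.x j} := by
  apply Nat.sInf_mem
  exact ⟨P.c i, ⟨i, ⟨by omega, le_rfl, hxy⟩, rfl⟩⟩

lemma cR_pos {P : DPath} {y : ℝ} {i : ℕ} (hi1 : 1 ≤ i) (hin : i ≤ P.n)
    (hxy : y < P.x i) : 1 ≤ P.cR 0 y i := by
  obtain ⟨j, ⟨hj1, hj2, _⟩, hje⟩ := cR_mem hi1 hxy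
  rw [← hje]
  exact P.hc j (by omega) (by omega)

lemma cR_mono {P : DPath} {y₁ y₂ : ℝ} (h : y₁ ≤ y₂) {i : ℕ} (hi1 : 1 ≤ i)
    (hxy : y₂ < P.x i) : P.cR 0 y₁ i ≤ P.cR 0 y₂ i := by
  apply Nat.sInf_le
  obtain ⟨j, ⟨hj1, hj2, hj3⟩, hje⟩ := cR_mem hi1 hxy
  exact ⟨j, ⟨hj1, hj2, lt_of_le_of_lt h hj3⟩, hje⟩

/-- Ceiling term is at least 1. -/
lemma ceil_ge_one {W c : ℕ} (hW : 1 ≤ W) (hc : 1 ≤ c) :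
    (1 : ℝ) ≤ (⌈(W : ℝ) / (c : ℝ)⌉ : ℝ) := by
  have : (0:ℝ) < (W : ℝ) / (c : ℝ) := by positivity
  exact_mod_cast Int.ceil_pos.mpr this

lemma ceil_div_le {W c₁ c₂ : ℕ} (hc₂ : 1 ≤ c₂) (h : c₂ ≤ c₁) :
    (⌈(W : ℝ) / (c₁ : ℝ)⌉ : ℝ) ≤ (⌈(W : ℝ) / (c₂ : ℝ)⌉ : ℝ) := by
  have h1 : (W : ℝ) / (c₁ : ℝ) ≤ (W : ℝ) / (c₂ : ℝ) := by
    apply div_le_div_of_nonneg_left (by positivity) (by exact_mod_cast hc₂)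
    exact_mod_cast h
  exact_mod_cast Int.ceil_le_ceil h1

end Aux

/-- if `w_0 ≥ 1` then `Θ_L(P,·)` is strictly increasing on
`[x_0, x_n]`; if `w_n ≥ 1` then `Θ_R(P,·)` is strictly decreasing on
`[x_0, x_n]`. -/
theorem stmt4 (P : DPath) (hn : 1 ≤ P.n) :
    (1 ≤ P.w 0 → StrictMonoOn (ThetaL P 0 P.n) (Set.Icc (P.x 0) (P.x P.n))) ∧
    (1 ≤ P.w P.n → StrictAntiOn (ThetaR P 0 P.n) (Set.Icc (P.x 0) (P.x P.n))) := by
  set n := P.n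
  constructor
  · -- ThetaL strictly increasing
    intro hw0 y₁ hy₁ y₂ hy₂ h12
    have hfin₁ := setL_finite P 0 n y₁
    have hfin₂ := setL_finite P 0 n y₂
    have hbdd₂ : BddAbove (insert (0:ℝ) {t : ℝ | ∃ i, 0 ≤ i ∧ i ≤ n ∧ P.x i < y₂ ∧ 1 ≤ P.W 0 i ∧
        t = (y₂ - P.x i) * P.τ + (⌈(P.W 0 i : ℝ) / (P.cL n y₂ i : ℝ)⌉ : ℝ) - 1}) :=
      (hfin₂.insert 0).bddAbove
    have hmem : ThetaL P 0 n y₁ ∈ insert (0:ℝ) {t : ℝ | ∃ i, 0 ≤ i ∧ i ≤ n ∧ P.x i < y₁ ∧ 1 ≤ P.W 0 i ∧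
        t = (y₁ - P.x i) * P.τ + (⌈(P.W 0 i : ℝ) / (P.cL n y₁ i : ℝ)⌉ : ℝ) - 1} :=
      Set.Nonempty.csSup_mem (Set.insert_nonempty _ _) (hfin₁.insert 0)
    rcases hmem with h0 | ⟨i, _, hin, hxi, hWi, ht⟩
    · -- ThetaL y₁ = 0; use i = 0 at y₂
      have hx0 : P.x 0 < y₂ := lt_of_le_of_lt hy₁.1 h12
      have hW0 : 1 ≤ P.W 0 0 := by simpa [DPath.W] using hw0
      have hcpos : 1 ≤ P.cL n y₂ 0 := cL_pos (by omega) hx0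
      have hmem₂ : (y₂ - P.x 0) * P.τ + (⌈(P.W 0 0 : ℝ) / (P.cL n y₂ 0 : ℝ)⌉ : ℝ) - 1 ∈
          {t : ℝ | ∃ i, 0 ≤ i ∧ i ≤ n ∧ P.x i < y₂ ∧ 1 ≤ P.W 0 i ∧
          t = (y₂ - P.x i) * P.τ + (⌈(P.W 0 i : ℝ) / (P.cL n y₂ i : ℝ)⌉ : ℝ) - 1} :=
        ⟨0, le_rfl, by omega, hx0, hW0, rfl⟩
      have h1 : (y₂ - P.x 0) * P.τ + (⌈(P.W 0 0 : ℝ) / (P.cL n y₂ 0 : ℝ)⌉ : ℝ) - 1 ≤ ThetaL P 0 n y₂ :=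
        le_csSup hbdd₂ (Set.mem_insert_of_mem _ hmem₂)
      have h2 : (0:ℝ) < (y₂ - P.x 0) * P.τ + (⌈(P.W 0 0 : ℝ) / (P.cL n y₂ 0 : ℝ)⌉ : ℝ) - 1 := by
        have hc1 := ceil_ge_one hW0 hcpos
        have : (0:ℝ) < (y₂ - P.x 0) * P.τ := mul_pos (by linarith) P.hτ
        linarith
      rw [h0]; linarith
    · -- witness i works at y₂ too
      have hxi₂ : P.x i < y₂ := lt_trans hxi h12
      have hi_lt : i + 1 ≤ n := by
        rcases Nat.lt_or_ge i n with h | h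
        · omega
        · exfalso; have : i = n := le_antisymm hin h
          subst this; exact absurd (lt_of_lt_of_le hxi hy₁.2) (lt_irrefl _)
      have hc₁pos : 1 ≤ P.cL n y₁ i := cL_pos hi_lt hxi
      have hc₂pos : 1 ≤ P.cL n y₂ i := cL_pos hi_lt hxi₂
      have hcle : P.cL n y₂ i ≤ P.cL n y₁ i := cL_anti (le_of_lt h12) hi_lt hxi
      have hmem₂ : (y₂ - P.x i) * P.τ + (⌈(P.W 0 i : ℝ) / (P.cL n y₂ i : ℝ)⌉ : ℝ) - 1 ∈
          {t : ℝ | ∃ i, 0 ≤ i ∧ i ≤ n ∧ P.x i < y₂ ∧ 1 ≤ P.W 0 i ∧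
          t = (y₂ - P.x i) * P.τ + (⌈(P.W 0 i : ℝ) / (P.cL n y₂ i : ℝ)⌉ : ℝ) - 1} :=
        ⟨i, Nat.zero_le _, hin, hxi₂, hWi, rfl⟩
      have h1 : (y₂ - P.x i) * P.τ + (⌈(P.W 0 i : ℝ) / (P.cL n y₂ i : ℝ)⌉ : ℝ) - 1 ≤ ThetaL P 0 n y₂ :=
        le_csSup hbdd₂ (Set.mem_insert_of_mem _ hmem₂)
      have hceil : (⌈(P.W 0 i : ℝ) / (P.cL n y₁ i : ℝ)⌉ : ℝ) ≤
          (⌈(P.W 0 i : ℝ) / (P.cL n y₂ i : ℝ)⌉ : ℝ) := ceil_div_le hc₂pos hcle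
      have hdist : (y₁ - P.x i) * P.τ < (y₂ - P.x i) * P.τ :=
        mul_lt_mul_of_pos_right (by linarith) P.hτ
      rw [ht]; linarith
  · -- ThetaR strictly decreasing
    intro hwn y₁ hy₁ y₂ hy₂ h12
    have hfin₁ := setR_finite P 0 n y₁
    have hfin₂ := setR_finite P 0 n y₂
    have hbdd₁ : BddAbove (insert (0:ℝ) {t : ℝ | ∃ i, 0 ≤ i ∧ i ≤ n ∧ y₁ < P.x i ∧ 1 ≤ P.W i n ∧
        t = (P.x i - y₁) * P.τ + (⌈(P.W i n : ℝ) / (P.cR 0 y₁ i : ℝ)⌉ : ℝ) - 1}) :=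
      (hfin₁.insert 0).bddAbove
    have hmem : ThetaR P 0 n y₂ ∈ insert (0:ℝ) {t : ℝ | ∃ i, 0 ≤ i ∧ i ≤ n ∧ y₂ < P.x i ∧ 1 ≤ P.W i n ∧
        t = (P.x i - y₂) * P.τ + (⌈(P.W i n : ℝ) / (P.cR 0 y₂ i : ℝ)⌉ : ℝ) - 1} :=
      Set.Nonempty.csSup_mem (Set.insert_nonempty _ _) (hfin₂.insert 0)
    rcases hmem with h0 | ⟨i, _, hin, hxi, hWi, ht⟩
    · -- ThetaR y₂ = 0; use i = n at y₁
      have hxn : y₁ < P.x n := lt_of_lt_of_le h12 hy₂.2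
      have hWn : 1 ≤ P.W n n := by simpa [DPath.W] using hwn
      have hcpos : 1 ≤ P.cR 0 y₁ n := cR_pos hn le_rfl hxn
      have hmem₁ : (P.x n - y₁) * P.τ + (⌈(P.W n n : ℝ) / (P.cR 0 y₁ n : ℝ)⌉ : ℝ) - 1 ∈
          {t : ℝ | ∃ i, 0 ≤ i ∧ i ≤ n ∧ y₁ < P.x i ∧ 1 ≤ P.W i n ∧
          t = (P.x i - y₁) * P.τ + (⌈(P.W i n : ℝ) / (P.cR 0 y₁ i : ℝ)⌉ : ℝ) - 1} :=
        ⟨n, Nat.zero_le _, le_rfl, hxn, hWn, rfl⟩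
      have h1 : (P.x n - y₁) * P.τ + (⌈(P.W n n : ℝ) / (P.cR 0 y₁ n : ℝ)⌉ : ℝ) - 1 ≤ ThetaR P 0 n y₁ :=
        le_csSup hbdd₁ (Set.mem_insert_of_mem _ hmem₁)
      have h2 : (0:ℝ) < (P.x n - y₁) * P.τ + (⌈(P.W n n : ℝ) / (P.cR 0 y₁ n : ℝ)⌉ : ℝ) - 1 := by
        have hc1 := ceil_ge_one hWn hcpos
        have : (0:ℝ) < (P.x n - y₁) * P.τ := mul_pos (by linarith) P.hτ
        linarith
      rw [h0]; linarith
    · -- witness i works at y₁ too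
      have hxi₁ : y₁ < P.x i := lt_trans h12 hxi
      have hi1 : 1 ≤ i := by
        rcases Nat.eq_zero_or_pos i with h | h
        · exfalso; subst h
          exact absurd (lt_of_le_of_lt hy₂.1 hxi) (lt_irrefl _)
        · omega
      have hc₂pos : 1 ≤ P.cR 0 y₂ i := cR_pos hi1 hin hxi
      have hc₁pos : 1 ≤ P.cR 0 y₁ i := cR_pos hi1 hin hxi₁
      have hcle : P.cR 0 y₁ i ≤ P.cR 0 y₂ i := cR_mono (le_of_lt h12) hi1 hxi
      have hmem₁ : (P.x i - y₁) * P.τ + (⌈(P.W i n : ℝ) / (P.cR 0 y₁ i : ℝ)⌉ : ℝ) - 1 ∈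
          {t : ℝ | ∃ i, 0 ≤ i ∧ i ≤ n ∧ y₁ < P.x i ∧ 1 ≤ P.W i n ∧
          t = (P.x i - y₁) * P.τ + (⌈(P.W i n : ℝ) / (P.cR 0 y₁ i : ℝ)⌉ : ℝ) - 1} :=
        ⟨i, Nat.zero_le _, hin, hxi₁, hWi, rfl⟩
      have h1 : (P.x i - y₁) * P.τ + (⌈(P.W i n : ℝ) / (P.cR 0 y₁ i : ℝ)⌉ : ℝ) - 1 ≤ ThetaR P 0 n y₁ :=
        le_csSup hbdd₁ (Set.mem_insert_of_mem _ hmem₁)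
      have hceil : (⌈(P.W i n : ℝ) / (P.cR 0 y₂ i : ℝ)⌉ : ℝ) ≤
          (⌈(P.W i n : ℝ) / (P.cR 0 y₁ i : ℝ)⌉ : ℝ) := ceil_div_le hc₁pos hcle
      have hdist : (P.x i - y₂) * P.τ < (P.x i - y₁) * P.τ :=
        mul_lt_mul_of_pos_right (by linarith) P.hτ
      rw [ht]; linarith
end

section
/- For every dynamic path instance P, the function x ↦ Θ(P,x) attains its infimum on [x_0, x_n]: there exists x* ∈ [x_0, x_n] such that Θ(P,x*) ≤ Θ(P,x) for all x ∈ [x_0, x_n]. -/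
section AuxLsc

open Filter Set

/-- Lower semicontinuity on a set (explicit form for `ℝ`). -/
def LscOn (f : ℝ → ℝ) (s : Set ℝ) : Prop :=
  ∀ x ∈ s, ∀ t : ℝ, t < f x → ∀ᶠ y in nhdsWithin x s, t < f y

theorem LscOn.max' {f g : ℝ → ℝ} {s : Set ℝ} (hf : LscOn f s) (hg : LscOn g s) :
    LscOn (fun y => max (f y) (g y)) s := by
  intro x hx t ht
  rcases lt_max_iff.1 ht with h | h
  · filter_upwards [hf x hx t h] with y hy using lt_max_iff.2 (Or.inl hy)
  · filter_upwards [hg x hx t h] with y hy using lt_max_iff.2 (Or.inr hy)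

theorem lscOn_const {c : ℝ} {s : Set ℝ} : LscOn (fun _ => c) s :=
  fun _ _ t ht => Filter.Eventually.of_forall fun _ => ht

theorem lscOn_iSup {m : ℕ} {f : Fin (m + 1) → ℝ → ℝ} {s : Set ℝ}
    (hf : ∀ i, LscOn (f i) s) : LscOn (fun y => ⨆ i, f i y) s := by
  intro x hx t ht
  obtain ⟨i, hi⟩ := exists_lt_of_lt_ciSup ht
  filter_upwards [hf i x hx t hi] with y hy
  exact hy.trans_le (le_ciSup (Set.Finite.bddAbove (Set.finite_range (fun i => f i y))) i)

/-- A function lsc on a compact interval attains its minimum. -/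
theorem LscOn.exists_min {f : ℝ → ℝ} {a b : ℝ} (hab : a ≤ b)
    (hf : LscOn f (Set.Icc a b)) :
    ∃ x ∈ Set.Icc a b, ∀ y ∈ Set.Icc a b, f x ≤ f y := by
  have hsne : (Set.Icc a b).Nonempty := ⟨a, le_refl a, hab⟩
  haveI : Nonempty (Set.Icc a b) := hsne.to_subtype
  set C : Set.Icc a b → Set ℝ := fun z => {y | y ∈ Set.Icc a b ∧ f y ≤ f z.1} with hC
  have hCsub : ∀ z, C z ⊆ Set.Icc a b := fun z y hy => hy.1
  have hCcl : ∀ z, IsClosed (C z) := by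
    intro z
    refine isClosed_of_closure_subset fun y hy => ?_
    have hys : y ∈ Set.Icc a b := by
      have h1 := closure_mono (hCsub z) hy
      rwa [IsClosed.closure_eq isClosed_Icc] at h1
    refine ⟨hys, ?_⟩
    by_contra hlt
    push_neg at hlt
    have hev := hf y hys (f z.1) hlt
    have hne : (nhdsWithin y (C z)).NeBot := mem_closure_iff_nhdsWithin_neBot.1 hy
    have hev2 : ∀ᶠ w in nhdsWithin y (C z), f z.1 < f w := nhdsWithin_mono y (hCsub z) hev
    have hev3 : ∀ᶠ w in nhdsWithin y (C z), w ∈ C z := eventually_mem_nhdsWithin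
    obtain ⟨w, hw1, hw2⟩ := (hev2.and hev3).exists
    exact absurd hw2.2 (not_le.2 hw1)
  have hCcomp : ∀ z, IsCompact (C z) := fun z =>
    IsCompact.of_isClosed_subset isCompact_Icc (hCcl z) (hCsub z)
  have hCne : ∀ z, (C z).Nonempty := fun z => ⟨z.1, z.2, le_refl _⟩
  have hdir : Directed (· ⊇ ·) C := by
    intro z1 z2
    by_cases h : f z1.1 ≤ f z2.1
    · exact ⟨z1, fun y hy => hy, fun y hy => ⟨hy.1, hy.2.trans h⟩⟩
    · exact ⟨z2, fun y hy => ⟨hy.1, hy.2.trans (le_of_not_ge h)⟩, fun y hy => hy⟩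
  obtain ⟨x, hx⟩ :=
    IsCompact.nonempty_iInter_of_directed_nonempty_isCompact_isClosed C hdir hCne hCcomp hCcl
  have hx' := Set.mem_iInter.1 hx
  refine ⟨x, (hx' ⟨a, le_refl a, hab⟩).1, fun y hy => (hx' ⟨y, hy⟩).2⟩

end AuxLsc

section AuxDPath

/-- The left-evacuation term for index `i` (with `a = 0`, `b = P.n`). -/
noncomputable def termL (P : DPath) (i : ℕ) (y : ℝ) : ℝ :=
  (y - P.x i) * P.τ + (⌈(P.W 0 i : ℝ) / (P.cL P.n y i : ℝ)⌉ : ℝ) - 1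

/-- The right-evacuation term for index `i` (with `a = 0`, `b = P.n`). -/
noncomputable def termR (P : DPath) (i : ℕ) (y : ℝ) : ℝ :=
  (P.x i - y) * P.τ + (⌈(P.W i P.n : ℝ) / (P.cR 0 y i : ℝ)⌉ : ℝ) - 1

/-- Guarded left term. -/
noncomputable def gL (P : DPath) (i : ℕ) (y : ℝ) : ℝ :=
  if P.x i < y ∧ 1 ≤ P.W 0 i then termL P i y else 0

/-- Guarded right term. -/
noncomputable def gR (P : DPath) (i : ℕ) (y : ℝ) : ℝ :=
  if y < P.x i ∧ 1 ≤ P.W i P.n then termR P i y else 0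

theorem x0_le_xn (P : DPath) : P.x 0 ≤ P.x P.n := by
  have h : ∀ m, m ≤ P.n → P.x 0 ≤ P.x m := by
    intro m
    induction m with
    | zero => intro _; exact le_refl _
    | succ k ih => intro hk; exact (ih (by omega)).trans (P.hx k (by omega)).le
  exact h P.n le_rfl

theorem cL_one_le (P : DPath) {y : ℝ} {i : ℕ}
    (hne : {j | i + 1 ≤ j ∧ j ≤ P.n ∧ P.x (j - 1) < y}.Nonempty) :
    1 ≤ P.cL P.n y i := by
  obtain ⟨j, hj, hjc⟩ := Nat.sInf_mem (hne.image P.c)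
  simp only [Set.mem_setOf_eq] at hj
  have h1 : 0 < P.c j := P.hc j (by omega) hj.2.1
  rw [DPath.cL, ← hjc]
  omega

theorem cR_one_le (P : DPath) {y : ℝ} {i : ℕ} (hi : i ≤ P.n)
    (hne : {j | 0 + 1 ≤ j ∧ j ≤ i ∧ y < P.x j}.Nonempty) :
    1 ≤ P.cR 0 y i := by
  obtain ⟨j, hj, hjc⟩ := Nat.sInf_mem (hne.image P.c)
  simp only [Set.mem_setOf_eq] at hj
  have h1 : 0 < P.c j := P.hc j (by omega) (by omega)
  rw [DPath.cR, ← hjc]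
  omega

theorem one_le_ceil_div {Wn d : ℕ} (hW : 1 ≤ Wn) (hd : 1 ≤ d) :
    (1 : ℝ) ≤ (⌈(Wn : ℝ) / (d : ℝ)⌉ : ℝ) := by
  have h : (0 : ℝ) < (Wn : ℝ) / (d : ℝ) :=
    div_pos (by exact_mod_cast hW) (by exact_mod_cast hd)
  exact_mod_cast Int.ceil_pos.2 h

theorem gL_nonneg (P : DPath) (i : ℕ) (hi : i ≤ P.n) {y : ℝ} (hy : y ≤ P.x P.n) :
    0 ≤ gL P i y := by
  rw [gL]
  split
  case isTrue h =>
    obtain ⟨hxy, hW⟩ := h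
    have hin : i < P.n := by
      rcases Nat.lt_or_ge i P.n with h' | h'
      · exact h'
      · exfalso; have : i = P.n := le_antisymm hi h'; subst this; linarith
    have hne : {j | i + 1 ≤ j ∧ j ≤ P.n ∧ P.x (j - 1) < y}.Nonempty :=
      ⟨i + 1, le_refl _, by omega, by simpa using hxy⟩
    have h1 : 1 ≤ P.cL P.n y i := cL_one_le P hne
    have h2 := one_le_ceil_div hW h1
    have h3 : 0 ≤ (y - P.x i) * P.τ := le_of_lt (mul_pos (by linarith) P.hτ)
    rw [termL]; linarith
  case isFalse => exact le_refl 0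

theorem gR_nonneg (P : DPath) (i : ℕ) (hi : i ≤ P.n) {y : ℝ} (hy : P.x 0 ≤ y) :
    0 ≤ gR P i y := by
  rw [gR]
  split
  case isTrue h =>
    obtain ⟨hxy, hW⟩ := h
    have hin : 1 ≤ i := by
      rcases Nat.eq_zero_or_pos i with h' | h'
      · exfalso; subst h'; linarith
      · exact h'
    have hne : {j | 0 + 1 ≤ j ∧ j ≤ i ∧ y < P.x j}.Nonempty :=
      ⟨i, by omega, le_refl _, hxy⟩
    have h1 : 1 ≤ P.cR 0 y i := cR_one_le P hi hne
    have h2 := one_le_ceil_div hW h1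
    have h3 : 0 ≤ (P.x i - y) * P.τ := le_of_lt (mul_pos (by linarith) P.hτ)
    rw [termR]; linarith
  case isFalse => exact le_refl 0

theorem termL_mono (P : DPath) (i : ℕ) {y0 y : ℝ} (hy : y0 ≤ y) (hi : P.x i < y0)
    (hW : 1 ≤ P.W 0 i) : termL P i y0 ≤ termL P i y := by
  have hτ := P.hτ
  have hdist : (y0 - P.x i) * P.τ ≤ (y - P.x i) * P.τ := by nlinarith
  have hsub : {j | i + 1 ≤ j ∧ j ≤ P.n ∧ P.x (j - 1) < y0} ⊆
      {j | i + 1 ≤ j ∧ j ≤ P.n ∧ P.x (j - 1) < y} :=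
    fun j hj => ⟨hj.1, hj.2.1, hj.2.2.trans_le hy⟩
  have hceil : (⌈(P.W 0 i : ℝ) / (P.cL P.n y0 i : ℝ)⌉ : ℝ) ≤
      (⌈(P.W 0 i : ℝ) / (P.cL P.n y i : ℝ)⌉ : ℝ) := by
    by_cases hne : {j | i + 1 ≤ j ∧ j ≤ P.n ∧ P.x (j - 1) < y0}.Nonempty
    · have h0 : 1 ≤ P.cL P.n y0 i := cL_one_le P hne
      have h1 : 1 ≤ P.cL P.n y i := cL_one_le P (hne.mono hsub)
      have hle : P.cL P.n y i ≤ P.cL P.n y0 i := by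
        have hmem : P.cL P.n y0 i ∈ P.c '' {j | i + 1 ≤ j ∧ j ≤ P.n ∧ P.x (j - 1) < y} := by
          rw [DPath.cL]
          exact Set.image_mono hsub (Nat.sInf_mem (hne.image P.c))
        rw [DPath.cL]
        exact Nat.sInf_le hmem
      have hdiv : (P.W 0 i : ℝ) / (P.cL P.n y0 i : ℝ) ≤ (P.W 0 i : ℝ) / (P.cL P.n y i : ℝ) := by
        apply div_le_div_of_nonneg_left (Nat.cast_nonneg _)
        · exact_mod_cast h1
        · exact_mod_cast hle
      exact_mod_cast Int.ceil_le_ceil hdiv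
    · rw [Set.not_nonempty_iff_eq_empty] at hne
      have h0 : P.cL P.n y0 i = 0 := by
        rw [DPath.cL, hne, Set.image_empty, Nat.sInf_empty]
      rw [h0]
      push_cast
      rw [div_zero, Int.ceil_zero]
      have := Int.ceil_nonneg (div_nonneg (Nat.cast_nonneg (α := ℝ) (P.W 0 i))
        (Nat.cast_nonneg (P.cL P.n y i)))
      exact_mod_cast this
  rw [termL, termL]; linarith

theorem termR_mono (P : DPath) (i : ℕ) (hi : i ≤ P.n) {y0 y : ℝ} (hy : y ≤ y0)
    (hi0 : y0 < P.x i) (hW : 1 ≤ P.W i P.n) : termR P i y0 ≤ termR P i y := by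
  have hτ := P.hτ
  have hdist : (P.x i - y0) * P.τ ≤ (P.x i - y) * P.τ := by nlinarith
  have hsub : {j | 0 + 1 ≤ j ∧ j ≤ i ∧ y0 < P.x j} ⊆
      {j | 0 + 1 ≤ j ∧ j ≤ i ∧ y < P.x j} :=
    fun j hj => ⟨hj.1, hj.2.1, lt_of_le_of_lt hy hj.2.2⟩
  have hceil : (⌈(P.W i P.n : ℝ) / (P.cR 0 y0 i : ℝ)⌉ : ℝ) ≤
      (⌈(P.W i P.n : ℝ) / (P.cR 0 y i : ℝ)⌉ : ℝ) := by
    by_cases hne : {j | 0 + 1 ≤ j ∧ j ≤ i ∧ y0 < P.x j}.Nonempty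
    · have h0 : 1 ≤ P.cR 0 y0 i := cR_one_le P hi hne
      have h1 : 1 ≤ P.cR 0 y i := cR_one_le P hi (hne.mono hsub)
      have hle : P.cR 0 y i ≤ P.cR 0 y0 i := by
        have hmem : P.cR 0 y0 i ∈ P.c '' {j | 0 + 1 ≤ j ∧ j ≤ i ∧ y < P.x j} := by
          rw [DPath.cR]
          exact Set.image_mono hsub (Nat.sInf_mem (hne.image P.c))
        rw [DPath.cR]
        exact Nat.sInf_le hmem
      have hdiv : (P.W i P.n : ℝ) / (P.cR 0 y0 i : ℝ) ≤ (P.W i P.n : ℝ) / (P.cR 0 y i : ℝ) := by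
        apply div_le_div_of_nonneg_left (Nat.cast_nonneg _)
        · exact_mod_cast h1
        · exact_mod_cast hle
      exact_mod_cast Int.ceil_le_ceil hdiv
    · rw [Set.not_nonempty_iff_eq_empty] at hne
      have h0 : P.cR 0 y0 i = 0 := by
        rw [DPath.cR, hne, Set.image_empty, Nat.sInf_empty]
      rw [h0]
      push_cast
      rw [div_zero, Int.ceil_zero]
      have := Int.ceil_nonneg (div_nonneg (Nat.cast_nonneg (α := ℝ) (P.W i P.n))
        (Nat.cast_nonneg (P.cR 0 y i)))
      exact_mod_cast this
  rw [termR, termR]; linarith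

theorem gL_lsc (P : DPath) (i : ℕ) (hi : i ≤ P.n) :
    LscOn (gL P i) (Set.Icc (P.x 0) (P.x P.n)) := by
  intro y0 hy0 t ht
  by_cases hcond : P.x i < y0 ∧ 1 ≤ P.W 0 i
  · obtain ⟨hxi, hW⟩ := hcond
    have hval : gL P i y0 = termL P i y0 := if_pos ⟨hxi, hW⟩
    rw [hval] at ht
    have hτ := P.hτ
    set F : Finset ℕ := (Finset.range (P.n + 1)).filter (fun k => P.x k < y0) with hF
    have hiF : i ∈ F := Finset.mem_filter.2 ⟨Finset.mem_range.2 (by omega), hxi⟩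
    have hFne : F.Nonempty := ⟨i, hiF⟩
    set ε1 : ℝ := F.inf' hFne (fun k => y0 - P.x k) with hε1
    have hε1pos : 0 < ε1 := by
      rw [hε1, Finset.lt_inf'_iff]
      intro k hk
      have := (Finset.mem_filter.1 hk).2
      linarith
    have hε1i : ε1 ≤ y0 - P.x i := Finset.inf'_le _ hiF
    set ε2 : ℝ := (termL P i y0 - t) / P.τ with hε2
    have hε2pos : 0 < ε2 := div_pos (by linarith) hτ
    set ε : ℝ := min ε1 ε2 with hε
    have hεpos : 0 < ε := lt_min hε1pos hε2pos
    have hε1' : ε ≤ ε1 := min_le_left _ _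
    have hε2' : ε ≤ ε2 := min_le_right _ _
    have hmem : Set.Ioi (y0 - ε) ∈ nhdsWithin y0 (Set.Icc (P.x 0) (P.x P.n)) :=
      mem_nhdsWithin_of_mem_nhds (Ioi_mem_nhds (by linarith))
    filter_upwards [hmem] with y hy
    have hy' : y0 - ε < y := hy
    have hxiy : P.x i < y := by linarith
    rcases le_or_gt y0 y with hc | hc
    · have hmono := termL_mono P i hc hxi hW
      rw [gL, if_pos ⟨hxiy, hW⟩]
      linarith
    · have hsets : {j | i + 1 ≤ j ∧ j ≤ P.n ∧ P.x (j - 1) < y} =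
          {j | i + 1 ≤ j ∧ j ≤ P.n ∧ P.x (j - 1) < y0} := by
        ext j
        simp only [Set.mem_setOf_eq]
        constructor
        · rintro ⟨h1, h2, h3⟩; exact ⟨h1, h2, h3.trans hc⟩
        · rintro ⟨h1, h2, h3⟩
          refine ⟨h1, h2, ?_⟩
          have hjF : j - 1 ∈ F := Finset.mem_filter.2 ⟨Finset.mem_range.2 (by omega), h3⟩
          have h4 : ε1 ≤ y0 - P.x (j - 1) := Finset.inf'_le _ hjF
          linarith
      have hcLeq : P.cL P.n y i = P.cL P.n y0 i := by
        rw [DPath.cL, DPath.cL, hsets]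
      rw [gL, if_pos ⟨hxiy, hW⟩, termL, hcLeq]
      have h5 : (y0 - y) * P.τ < termL P i y0 - t := by
        have h6 : y0 - y < ε2 := by linarith
        have h7 : (y0 - y) * P.τ < ε2 * P.τ := by nlinarith
        rw [hε2, div_mul_cancel₀ _ (ne_of_gt hτ)] at h7
        exact h7
      rw [termL] at h5
      nlinarith
  · have hval : gL P i y0 = 0 := if_neg hcond
    rw [hval] at ht
    refine Filter.eventually_iff_exists_mem.2
      ⟨Set.Icc (P.x 0) (P.x P.n), self_mem_nhdsWithin, fun y hy => ?_⟩
    have := gL_nonneg P i hi hy.2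
    linarith

theorem gR_lsc (P : DPath) (i : ℕ) (hi : i ≤ P.n) :
    LscOn (gR P i) (Set.Icc (P.x 0) (P.x P.n)) := by
  intro y0 hy0 t ht
  by_cases hcond : y0 < P.x i ∧ 1 ≤ P.W i P.n
  · obtain ⟨hxi, hW⟩ := hcond
    have hval : gR P i y0 = termR P i y0 := if_pos ⟨hxi, hW⟩
    rw [hval] at ht
    have hτ := P.hτ
    set F : Finset ℕ := (Finset.range (P.n + 1)).filter (fun k => y0 < P.x k) with hF
    have hiF : i ∈ F := Finset.mem_filter.2 ⟨Finset.mem_range.2 (by omega), hxi⟩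
    have hFne : F.Nonempty := ⟨i, hiF⟩
    set ε1 : ℝ := F.inf' hFne (fun k => P.x k - y0) with hε1
    have hε1pos : 0 < ε1 := by
      rw [hε1, Finset.lt_inf'_iff]
      intro k hk
      have := (Finset.mem_filter.1 hk).2
      linarith
    have hε1i : ε1 ≤ P.x i - y0 := Finset.inf'_le _ hiF
    set ε2 : ℝ := (termR P i y0 - t) / P.τ with hε2
    have hε2pos : 0 < ε2 := div_pos (by linarith) hτ
    set ε : ℝ := min ε1 ε2 with hε
    have hεpos : 0 < ε := lt_min hε1pos hε2pos
    have hε1' : ε ≤ ε1 := min_le_left _ _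
    have hε2' : ε ≤ ε2 := min_le_right _ _
    have hmem : Set.Iio (y0 + ε) ∈ nhdsWithin y0 (Set.Icc (P.x 0) (P.x P.n)) :=
      mem_nhdsWithin_of_mem_nhds (Iio_mem_nhds (by linarith))
    filter_upwards [hmem] with y hy
    have hy' : y < y0 + ε := hy
    have hxiy : y < P.x i := by linarith
    rcases le_or_gt y y0 with hc | hc
    · have hmono := termR_mono P i hi hc hxi hW
      rw [gR, if_pos ⟨hxiy, hW⟩]
      linarith
    · have hsets : {j | 0 + 1 ≤ j ∧ j ≤ i ∧ y < P.x j} =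
          {j | 0 + 1 ≤ j ∧ j ≤ i ∧ y0 < P.x j} := by
        ext j
        simp only [Set.mem_setOf_eq]
        constructor
        · rintro ⟨h1, h2, h3⟩; exact ⟨h1, h2, hc.trans h3⟩
        · rintro ⟨h1, h2, h3⟩
          refine ⟨h1, h2, ?_⟩
          have hjF : j ∈ F := Finset.mem_filter.2 ⟨Finset.mem_range.2 (by omega), h3⟩
          have h4 : ε1 ≤ P.x j - y0 := Finset.inf'_le _ hjF
          linarith
      have hcReq : P.cR 0 y i = P.cR 0 y0 i := by
        rw [DPath.cR, DPath.cR, hsets]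
      rw [gR, if_pos ⟨hxiy, hW⟩, termR, hcReq]
      have h5 : (y - y0) * P.τ < termR P i y0 - t := by
        have h6 : y - y0 < ε2 := by linarith
        have h7 : (y - y0) * P.τ < ε2 * P.τ := by nlinarith
        rw [hε2, div_mul_cancel₀ _ (ne_of_gt hτ)] at h7
        exact h7
      rw [termR] at h5
      nlinarith
  · have hval : gR P i y0 = 0 := if_neg hcond
    rw [hval] at ht
    refine Filter.eventually_iff_exists_mem.2
      ⟨Set.Icc (P.x 0) (P.x P.n), self_mem_nhdsWithin, fun y hy => ?_⟩
    have := gR_nonneg P i hi hy.1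
    linarith

theorem thetaL_eq (P : DPath) (y : ℝ) :
    ThetaL P 0 P.n y = max 0 (⨆ i : Fin (P.n + 1), gL P i y) := by
  have hset : insert (0 : ℝ) {t : ℝ | ∃ i, 0 ≤ i ∧ i ≤ P.n ∧ P.x i < y ∧ 1 ≤ P.W 0 i ∧
      t = (y - P.x i) * P.τ + (⌈(P.W 0 i : ℝ) / (P.cL P.n y i : ℝ)⌉ : ℝ) - 1}
      = insert (0 : ℝ) (Set.range fun i : Fin (P.n + 1) => gL P i y) := by
    ext t
    simp only [Set.mem_insert_iff, Set.mem_setOf_eq, Set.mem_range]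
    constructor
    · rintro (rfl | ⟨i, -, hin, hxy, hW, rfl⟩)
      · exact Or.inl rfl
      · refine Or.inr ⟨⟨i, by omega⟩, ?_⟩
        simp only [gL, termL]
        rw [if_pos ⟨hxy, hW⟩]
    · rintro (rfl | ⟨i, rfl⟩)
      · exact Or.inl rfl
      · by_cases h : P.x i < y ∧ 1 ≤ P.W 0 i
        · refine Or.inr ⟨(i : ℕ), Nat.zero_le _, by omega, h.1, h.2, ?_⟩
          simp only [gL, termL]
          rw [if_pos h]
        · exact Or.inl (by simp only [gL]; rw [if_neg h])
  rw [ThetaL, hset,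
    csSup_insert (Set.Finite.bddAbove (Set.finite_range _)) (Set.range_nonempty _),
    iSup]

theorem thetaR_eq (P : DPath) (y : ℝ) :
    ThetaR P 0 P.n y = max 0 (⨆ i : Fin (P.n + 1), gR P i y) := by
  have hset : insert (0 : ℝ) {t : ℝ | ∃ i, 0 ≤ i ∧ i ≤ P.n ∧ y < P.x i ∧ 1 ≤ P.W i P.n ∧
      t = (P.x i - y) * P.τ + (⌈(P.W i P.n : ℝ) / (P.cR 0 y i : ℝ)⌉ : ℝ) - 1}
      = insert (0 : ℝ) (Set.range fun i : Fin (P.n + 1) => gR P i y) := by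
    ext t
    simp only [Set.mem_insert_iff, Set.mem_setOf_eq, Set.mem_range]
    constructor
    · rintro (rfl | ⟨i, -, hin, hxy, hW, rfl⟩)
      · exact Or.inl rfl
      · refine Or.inr ⟨⟨i, by omega⟩, ?_⟩
        simp only [gR, termR]
        rw [if_pos ⟨hxy, hW⟩]
    · rintro (rfl | ⟨i, rfl⟩)
      · exact Or.inl rfl
      · by_cases h : y < P.x i ∧ 1 ≤ P.W i P.n
        · refine Or.inr ⟨(i : ℕ), Nat.zero_le _, by omega, h.1, h.2, ?_⟩
          simp only [gR, termR]
          rw [if_pos h]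
        · exact Or.inl (by simp only [gR]; rw [if_neg h])
  rw [ThetaR, hset,
    csSup_insert (Set.Finite.bddAbove (Set.finite_range _)) (Set.range_nonempty _),
    iSup]

end AuxDPath

/-- `Θ(P,·)` attains its infimum on `[x_0, x_n]`. -/
theorem stmt6 (P : DPath) :
    ∃ xs ∈ Set.Icc (P.x 0) (P.x P.n),
      ∀ y ∈ Set.Icc (P.x 0) (P.x P.n), Theta P 0 P.n xs ≤ Theta P 0 P.n y := by
  have hab := x0_le_xn P
  have hL : LscOn (ThetaL P 0 P.n) (Set.Icc (P.x 0) (P.x P.n)) := by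
    have heq : ThetaL P 0 P.n = fun y => max 0 (⨆ i : Fin (P.n + 1), gL P i y) :=
      funext (thetaL_eq P)
    rw [heq]
    exact LscOn.max' lscOn_const (lscOn_iSup fun i => gL_lsc P i (by omega))
  have hR : LscOn (ThetaR P 0 P.n) (Set.Icc (P.x 0) (P.x P.n)) := by
    have heq : ThetaR P 0 P.n = fun y => max 0 (⨆ i : Fin (P.n + 1), gR P i y) :=
      funext (thetaR_eq P)
    rw [heq]
    exact LscOn.max' lscOn_const (lscOn_iSup fun i => gR_lsc P i (by omega))
  have hT : LscOn (Theta P 0 P.n) (Set.Icc (P.x 0) (P.x P.n)) := hL.max' hR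
  exact hT.exists_min hab
end

section
/- Let P be a dynamic path instance with n ≥ 1, w_0 ≥ 1 and w_n ≥ 1. Then there is a unique point x* ∈ [x_0, x_n] at which x ↦ Θ(P,x) attains its minimum over [x_0, x_n]. Moreover, for every x ∈ [x_0, x_n] with x < x* one has Θ_L(P,x) < Θ_R(P,x) (so Θ(P,x) = Θ_R(P,x)), and for every x ∈ [x_0, x_n] with x > x* one has Θ_L(P,x) > Θ_R(P,x) (so Θ(P,x) = Θ_L(P,x)). In particular Θ(P,·) is strictly unimodal: it strictly decreases on [x_0, x*] and strictly increases on [x*, x_n]. -/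
namespace S7

variable (P : DPath)

noncomputable def termL (y : ℝ) (i : ℕ) : ℝ :=
  (y - P.x i) * P.τ + (⌈(P.W 0 i : ℝ) / (P.cL P.n y i : ℝ)⌉ : ℝ) - 1

noncomputable def termR (y : ℝ) (i : ℕ) : ℝ :=
  (P.x i - y) * P.τ + (⌈(P.W i P.n : ℝ) / (P.cR 0 y i : ℝ)⌉ : ℝ) - 1

def SL (y : ℝ) : Set ℝ :=
  {t | ∃ i, 0 ≤ i ∧ i ≤ P.n ∧ P.x i < y ∧ 1 ≤ P.W 0 i ∧ t = termL P y i}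

def SR (y : ℝ) : Set ℝ :=
  {t | ∃ i, 0 ≤ i ∧ i ≤ P.n ∧ y < P.x i ∧ 1 ≤ P.W i P.n ∧ t = termR P y i}

lemma thetaL_eq (y : ℝ) : ThetaL P 0 P.n y = sSup (insert 0 (SL P y)) := rfl

lemma thetaR_eq (y : ℝ) : ThetaR P 0 P.n y = sSup (insert 0 (SR P y)) := rfl

lemma x_le {i j : ℕ} (hij : i ≤ j) (hj : j ≤ P.n) : P.x i ≤ P.x j := by
  induction j with
  | zero => simp_all
  | succ m ih =>
    rcases Nat.lt_or_ge i (m+1) with h | h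
    · have h1 : P.x i ≤ P.x m := ih (Nat.lt_succ_iff.mp h) (le_trans (Nat.le_succ m) hj)
      exact le_trans h1 (le_of_lt (P.hx m (Nat.lt_of_succ_le hj)))
    · have : i = m + 1 := le_antisymm hij h
      simp [this]

lemma x_lt {i j : ℕ} (hij : i < j) (hj : j ≤ P.n) : P.x i < P.x j := by
  rcases Nat.exists_eq_add_of_lt hij with ⟨m, rfl⟩
  have h1 : P.x i ≤ P.x (i + m) := x_le P (Nat.le_add_right i m) (by omega)
  have h2 : P.x (i + m) < P.x (i + m + 1) := P.hx _ (by omega)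
  linarith

lemma W0_ge (hw0 : 1 ≤ P.w 0) (i : ℕ) : 1 ≤ P.W 0 i := by
  have : P.w 0 ≤ P.W 0 i :=
    Finset.single_le_sum (f := P.w) (fun j _ => Nat.zero_le _) (by simp)
  omega

lemma Wn_ge (hwn : 1 ≤ P.w P.n) {i : ℕ} (hi : i ≤ P.n) : 1 ≤ P.W i P.n := by
  have : P.w P.n ≤ P.W i P.n :=
    Finset.single_le_sum (f := P.w) (fun j _ => Nat.zero_le _) (by simp [hi])
  omega

lemma JL_nonempty {i : ℕ} {y : ℝ} (hi : i ≤ P.n) (hxy : P.x i < y) (hy : y ≤ P.x P.n) :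
    (i + 1) ∈ {j | i + 1 ≤ j ∧ j ≤ P.n ∧ P.x (j - 1) < y} := by
  have hin : i < P.n := by
    rcases Nat.lt_or_ge i P.n with h | h
    · exact h
    · have : i = P.n := le_antisymm hi h
      subst this; linarith
  exact ⟨le_refl _, hin, by simpa using hxy⟩

lemma cL_one_le {i : ℕ} {y : ℝ} (hi : i ≤ P.n) (hxy : P.x i < y) (hy : y ≤ P.x P.n) :
    1 ≤ P.cL P.n y i := by
  have hne : (P.c '' {j | i + 1 ≤ j ∧ j ≤ P.n ∧ P.x (j - 1) < y}).Nonempty :=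
    ⟨P.c (i+1), Set.mem_image_of_mem _ (JL_nonempty P hi hxy hy)⟩
  have hmem := Nat.sInf_mem hne
  rcases hmem with ⟨j, ⟨hj1, hj2, hj3⟩, hj'⟩
  have : 0 < P.c j := P.hc j (by omega) hj2
  rw [DPath.cL, ← hj']; omega

lemma cL_anti {i : ℕ} {y y' : ℝ} (hi : i ≤ P.n) (hxy : P.x i < y) (hy : y ≤ P.x P.n)
    (hyy : y ≤ y') : P.cL P.n y' i ≤ P.cL P.n y i := by
  have hne : (P.c '' {j | i + 1 ≤ j ∧ j ≤ P.n ∧ P.x (j - 1) < y}).Nonempty :=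
    ⟨P.c (i+1), Set.mem_image_of_mem _ (JL_nonempty P hi hxy hy)⟩
  have hmem := Nat.sInf_mem hne
  apply Nat.sInf_le
  rcases hmem with ⟨j, ⟨hj1, hj2, hj3⟩, hj'⟩
  exact ⟨j, ⟨hj1, hj2, lt_of_lt_of_le hj3 hyy⟩, hj'⟩

lemma JR_nonempty {i : ℕ} {y : ℝ} (hi : i ≤ P.n) (hxy : y < P.x i) (hy : P.x 0 ≤ y) :
    i ∈ {j | 0 + 1 ≤ j ∧ j ≤ i ∧ y < P.x j} := by
  have : 1 ≤ i := by
    rcases Nat.eq_zero_or_pos i with h | h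
    · subst h; linarith
    · exact h
  exact ⟨by omega, le_refl _, hxy⟩

lemma cR_one_le {i : ℕ} {y : ℝ} (hi : i ≤ P.n) (hxy : y < P.x i) (hy : P.x 0 ≤ y) :
    1 ≤ P.cR 0 y i := by
  have hne : (P.c '' {j | 0 + 1 ≤ j ∧ j ≤ i ∧ y < P.x j}).Nonempty :=
    ⟨P.c i, Set.mem_image_of_mem _ (JR_nonempty P hi hxy hy)⟩
  have hmem := Nat.sInf_mem hne
  rcases hmem with ⟨j, ⟨hj1, hj2, hj3⟩, hj'⟩
  have : 0 < P.c j := P.hc j (by omega) (le_trans hj2 hi)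
  rw [DPath.cR, ← hj']; omega

lemma cR_anti {i : ℕ} {y y' : ℝ} (hi : i ≤ P.n) (hxy : y' < P.x i) (hy : P.x 0 ≤ y')
    (hyy : y ≤ y') : P.cR 0 y i ≤ P.cR 0 y' i := by
  have hne : (P.c '' {j | 0 + 1 ≤ j ∧ j ≤ i ∧ y' < P.x j}).Nonempty :=
    ⟨P.c i, Set.mem_image_of_mem _ (JR_nonempty P hi hxy hy)⟩
  have hmem := Nat.sInf_mem hne
  apply Nat.sInf_le
  rcases hmem with ⟨j, ⟨hj1, hj2, hj3⟩, hj'⟩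
  exact ⟨j, ⟨hj1, hj2, lt_of_le_of_lt hyy hj3⟩, hj'⟩

lemma SL_finite (y : ℝ) : (insert (0:ℝ) (SL P y)).Finite := by
  apply Set.Finite.insert
  apply Set.Finite.subset ((Set.finite_Iic P.n).image (termL P y))
  rintro t ⟨i, -, hi, -, -, rfl⟩
  exact Set.mem_image_of_mem _ hi

lemma SR_finite (y : ℝ) : (insert (0:ℝ) (SR P y)).Finite := by
  apply Set.Finite.insert
  apply Set.Finite.subset ((Set.finite_Iic P.n).image (termR P y))
  rintro t ⟨i, -, hi, -, -, rfl⟩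
  exact Set.mem_image_of_mem _ hi

lemma thetaL_mem (y : ℝ) : ThetaL P 0 P.n y ∈ insert (0:ℝ) (SL P y) := by
  rw [thetaL_eq]
  exact (Set.insert_nonempty _ _).csSup_mem (SL_finite P y)

lemma thetaR_mem (y : ℝ) : ThetaR P 0 P.n y ∈ insert (0:ℝ) (SR P y) := by
  rw [thetaR_eq]
  exact (Set.insert_nonempty _ _).csSup_mem (SR_finite P y)

lemma le_thetaL {t y : ℝ} (ht : t ∈ insert (0:ℝ) (SL P y)) : t ≤ ThetaL P 0 P.n y := by
  rw [thetaL_eq]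
  exact le_csSup (Set.Finite.bddAbove (SL_finite P y)) ht

lemma le_thetaR {t y : ℝ} (ht : t ∈ insert (0:ℝ) (SR P y)) : t ≤ ThetaR P 0 P.n y := by
  rw [thetaR_eq]
  exact le_csSup (Set.Finite.bddAbove (SR_finite P y)) ht

lemma thetaL_nonneg (y : ℝ) : 0 ≤ ThetaL P 0 P.n y := le_thetaL P (Set.mem_insert _ _)

lemma thetaR_nonneg (y : ℝ) : 0 ≤ ThetaR P 0 P.n y := le_thetaR P (Set.mem_insert _ _)


lemma one_le_ceil {W c : ℕ} (hW : 1 ≤ W) (hc : 1 ≤ c) :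
    (1:ℝ) ≤ (⌈(W:ℝ)/(c:ℝ)⌉ : ℝ) := by
  have h1 : (0:ℝ) < (W:ℝ)/(c:ℝ) := by
    apply div_pos <;> [exact_mod_cast hW; exact_mod_cast hc]
  have := Int.ceil_pos.mpr h1
  exact_mod_cast this

lemma ceil_le_ceil_of_c_le {W c c' : ℕ} (hc : 1 ≤ c) (hcc : c ≤ c') :
    (⌈(W:ℝ)/(c':ℝ)⌉ : ℝ) ≤ (⌈(W:ℝ)/(c:ℝ)⌉ : ℝ) := by
  have h1 : (W:ℝ)/(c':ℝ) ≤ (W:ℝ)/(c:ℝ) := by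
    apply div_le_div_of_nonneg_left (by positivity)
    · exact_mod_cast hc
    · exact_mod_cast hcc
  exact_mod_cast Int.ceil_le_ceil h1

lemma termL_pos {i : ℕ} {y : ℝ} (hi : i ≤ P.n) (hxy : P.x i < y) (hy : y ≤ P.x P.n)
    (hW : 1 ≤ P.W 0 i) : 0 < termL P y i := by
  have h1 := one_le_ceil hW (cL_one_le P hi hxy hy)
  have h2 : 0 < (y - P.x i) * P.τ := mul_pos (by linarith) P.hτ
  unfold termL; linarith

lemma termR_pos {i : ℕ} {y : ℝ} (hi : i ≤ P.n) (hxy : y < P.x i) (hy : P.x 0 ≤ y)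
    (hW : 1 ≤ P.W i P.n) : 0 < termR P y i := by
  have h1 := one_le_ceil hW (cR_one_le P hi hxy hy)
  have h2 : 0 < (P.x i - y) * P.τ := mul_pos (by linarith) P.hτ
  unfold termR; linarith

lemma termL_mono {i : ℕ} {y y' : ℝ} (hi : i ≤ P.n) (hxy : P.x i < y)
    (hyy : y ≤ y') (hy' : y' ≤ P.x P.n) :
    termL P y i + (y' - y) * P.τ ≤ termL P y' i := by
  have hy : y ≤ P.x P.n := le_trans hyy hy'
  have hc1 : 1 ≤ P.cL P.n y' i := cL_one_le P hi (lt_of_lt_of_le hxy hyy) hy'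
  have hcc : P.cL P.n y' i ≤ P.cL P.n y i := cL_anti P hi hxy hy hyy
  have h1 := ceil_le_ceil_of_c_le (W := P.W 0 i) hc1 hcc
  unfold termL
  nlinarith [P.hτ]

lemma termR_mono {i : ℕ} {y y' : ℝ} (hi : i ≤ P.n) (hxy : y' < P.x i)
    (hyy : y ≤ y') (hy : P.x 0 ≤ y) :
    termR P y' i + (y' - y) * P.τ ≤ termR P y i := by
  have hy' : P.x 0 ≤ y' := le_trans hy hyy
  have hc1 : 1 ≤ P.cR 0 y i := cR_one_le P hi (lt_of_le_of_lt hyy hxy) hy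
  have hcc : P.cR 0 y i ≤ P.cR 0 y' i := cR_anti P hi hxy hy' hyy
  have h1 := ceil_le_ceil_of_c_le (W := P.W i P.n) hc1 hcc
  unfold termR
  nlinarith [P.hτ]

lemma thetaL_strict (hw0 : 1 ≤ P.w 0) {y y' : ℝ} (hy0 : P.x 0 ≤ y) (hyy : y < y')
    (hy' : y' ≤ P.x P.n) : ThetaL P 0 P.n y < ThetaL P 0 P.n y' := by
  have hterm0 : termL P y' 0 ∈ SL P y' :=
    ⟨0, le_refl _, Nat.zero_le _, lt_of_le_of_lt hy0 hyy, W0_ge P hw0 0, rfl⟩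
  have hterm0le : termL P y' 0 ≤ ThetaL P 0 P.n y' :=
    le_thetaL P (Set.mem_insert_of_mem _ hterm0)
  have hterm0pos : 0 < termL P y' 0 :=
    termL_pos P (Nat.zero_le _) (lt_of_le_of_lt hy0 hyy) hy' (W0_ge P hw0 0)
  rcases thetaL_mem P y with h0 | ⟨i, -, hi, hxy, hW, heq⟩
  · rw [h0]; linarith
  · rw [heq]
    have h1 := termL_mono P hi hxy (le_of_lt hyy) hy'
    have h2 : termL P y' i ∈ SL P y' :=
      ⟨i, Nat.zero_le _, hi, lt_trans hxy hyy, hW, rfl⟩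
    have h3 : termL P y' i ≤ ThetaL P 0 P.n y' := le_thetaL P (Set.mem_insert_of_mem _ h2)
    have h4 : 0 < (y' - y) * P.τ := mul_pos (by linarith) P.hτ
    linarith

lemma thetaR_strict (hwn : 1 ≤ P.w P.n) {y y' : ℝ} (hy0 : P.x 0 ≤ y) (hyy : y < y')
    (hy' : y' ≤ P.x P.n) : ThetaR P 0 P.n y' < ThetaR P 0 P.n y := by
  have hterm0 : termR P y P.n ∈ SR P y :=
    ⟨P.n, Nat.zero_le _, le_refl _, lt_of_lt_of_le hyy hy', Wn_ge P hwn (le_refl _), rfl⟩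
  have hterm0le : termR P y P.n ≤ ThetaR P 0 P.n y :=
    le_thetaR P (Set.mem_insert_of_mem _ hterm0)
  have hterm0pos : 0 < termR P y P.n :=
    termR_pos P (le_refl _) (lt_of_lt_of_le hyy hy') hy0 (Wn_ge P hwn (le_refl _))
  rcases thetaR_mem P y' with h0 | ⟨i, -, hi, hxy, hW, heq⟩
  · rw [h0]; linarith
  · rw [heq]
    have h1 := termR_mono P hi hxy (le_of_lt hyy) hy0
    have h2 : termR P y i ∈ SR P y :=
      ⟨i, Nat.zero_le _, hi, lt_trans hyy hxy, hW, rfl⟩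
    have h3 : termR P y i ≤ ThetaR P 0 P.n y := le_thetaR P (Set.mem_insert_of_mem _ h2)
    have h4 : 0 < (y' - y) * P.τ := mul_pos (by linarith) P.hτ
    linarith

lemma thetaL_x0 : ThetaL P 0 P.n (P.x 0) = 0 := by
  have hempty : SL P (P.x 0) = ∅ := by
    ext t
    simp only [SL, Set.mem_setOf_eq, Set.mem_empty_iff_false, iff_false]
    rintro ⟨i, -, hi, hxy, -, -⟩
    exact absurd hxy (not_lt.mpr (x_le P (Nat.zero_le i) hi))
  rw [thetaL_eq, hempty]
  simp

lemma thetaR_xn : ThetaR P 0 P.n (P.x P.n) = 0 := by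
  have hempty : SR P (P.x P.n) = ∅ := by
    ext t
    simp only [SR, Set.mem_setOf_eq, Set.mem_empty_iff_false, iff_false]
    rintro ⟨i, -, hi, hxy, -, -⟩
    exact absurd hxy (not_lt.mpr (x_le P hi (le_refl _)))
  rw [thetaR_eq, hempty]
  simp

lemma thetaL_lip {y y' : ℝ} (hyy : y ≤ y')
    (h : ∀ i, i ≤ P.n → (P.x i < y ↔ P.x i < y')) :
    ThetaL P 0 P.n y' ≤ ThetaL P 0 P.n y + (y' - y) * P.τ := by
  have hcLeq : ∀ i, P.cL P.n y i = P.cL P.n y' i := by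
    intro i
    have hset : {j | i + 1 ≤ j ∧ j ≤ P.n ∧ P.x (j - 1) < y}
        = {j | i + 1 ≤ j ∧ j ≤ P.n ∧ P.x (j - 1) < y'} := by
      ext j
      simp only [Set.mem_setOf_eq]
      constructor
      · rintro ⟨hj1, hj2, hj3⟩; exact ⟨hj1, hj2, (h (j-1) (by omega)).mp hj3⟩
      · rintro ⟨hj1, hj2, hj3⟩; exact ⟨hj1, hj2, (h (j-1) (by omega)).mpr hj3⟩
    unfold DPath.cL
    rw [hset]
  rw [thetaL_eq P y']
  apply csSup_le (Set.insert_nonempty _ _)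
  rintro t (rfl | ⟨i, -, hi, hxy, hW, rfl⟩)
  · have := thetaL_nonneg P y
    have : 0 ≤ (y' - y) * P.τ := mul_nonneg (by linarith) (le_of_lt P.hτ)
    linarith [thetaL_nonneg P y]
  · have hxy' : P.x i < y := (h i hi).mpr hxy
    have hmem : termL P y i ∈ SL P y := ⟨i, Nat.zero_le _, hi, hxy', hW, rfl⟩
    have h1 : termL P y i ≤ ThetaL P 0 P.n y := le_thetaL P (Set.mem_insert_of_mem _ hmem)
    have h2 : termL P y' i = termL P y i + (y' - y) * P.τ := by
      unfold termL
      rw [← hcLeq i]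
      ring
    rw [h2]; linarith

lemma thetaR_lip {y y' : ℝ} (hyy : y ≤ y')
    (h : ∀ i, i ≤ P.n → (y < P.x i ↔ y' < P.x i)) :
    ThetaR P 0 P.n y ≤ ThetaR P 0 P.n y' + (y' - y) * P.τ := by
  have hcReq : ∀ i, i ≤ P.n → P.cR 0 y i = P.cR 0 y' i := by
    intro i hi
    have hset : {j | 0 + 1 ≤ j ∧ j ≤ i ∧ y < P.x j}
        = {j | 0 + 1 ≤ j ∧ j ≤ i ∧ y' < P.x j} := by
      ext j
      simp only [Set.mem_setOf_eq]
      constructor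
      · rintro ⟨hj1, hj2, hj3⟩; exact ⟨hj1, hj2, (h j (le_trans hj2 hi)).mp hj3⟩
      · rintro ⟨hj1, hj2, hj3⟩; exact ⟨hj1, hj2, (h j (le_trans hj2 hi)).mpr hj3⟩
    unfold DPath.cR
    rw [hset]
  rw [thetaR_eq P y]
  apply csSup_le (Set.insert_nonempty _ _)
  rintro t (rfl | ⟨i, -, hi, hxy, hW, rfl⟩)
  · have : 0 ≤ (y' - y) * P.τ := mul_nonneg (by linarith) (le_of_lt P.hτ)
    linarith [thetaR_nonneg P y']
  · have hxy' : y' < P.x i := (h i hi).mp hxy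
    have hmem : termR P y' i ∈ SR P y' := ⟨i, Nat.zero_le _, hi, hxy', hW, rfl⟩
    have h1 : termR P y' i ≤ ThetaR P 0 P.n y' := le_thetaR P (Set.mem_insert_of_mem _ hmem)
    have h2 : termR P y i = termR P y' i + (y' - y) * P.τ := by
      unfold termR
      rw [hcReq i hi]
      ring
    rw [h2]; linarith


theorem main (P : DPath) (hn : 1 ≤ P.n) (hw0 : 1 ≤ P.w 0) (hwn : 1 ≤ P.w P.n) :
    ∃ xs ∈ Set.Icc (P.x 0) (P.x P.n),
      (∀ y ∈ Set.Icc (P.x 0) (P.x P.n), Theta P 0 P.n xs ≤ Theta P 0 P.n y) ∧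
      (∀ y ∈ Set.Icc (P.x 0) (P.x P.n),
        (∀ z ∈ Set.Icc (P.x 0) (P.x P.n), Theta P 0 P.n y ≤ Theta P 0 P.n z) →
        y = xs) ∧
      (∀ y ∈ Set.Icc (P.x 0) (P.x P.n), y < xs →
        ThetaL P 0 P.n y < ThetaR P 0 P.n y ∧ Theta P 0 P.n y = ThetaR P 0 P.n y) ∧
      (∀ y ∈ Set.Icc (P.x 0) (P.x P.n), xs < y →
        ThetaR P 0 P.n y < ThetaL P 0 P.n y ∧ Theta P 0 P.n y = ThetaL P 0 P.n y) ∧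
      StrictAntiOn (Theta P 0 P.n) (Set.Icc (P.x 0) xs) ∧
      StrictMonoOn (Theta P 0 P.n) (Set.Icc xs (P.x P.n)) := by
  classical
  have hτ := P.hτ
  have hx0n : P.x 0 < P.x P.n := x_lt P (by omega) (le_refl _)
  set A : Set ℝ := {y | y ∈ Set.Icc (P.x 0) (P.x P.n) ∧
      ThetaR P 0 P.n y ≤ ThetaL P 0 P.n y} with hA
  have hxnA : P.x P.n ∈ A :=
    ⟨⟨le_of_lt hx0n, le_refl _⟩, by rw [thetaR_xn]; exact thetaL_nonneg P _⟩
  have hAne : A.Nonempty := ⟨_, hxnA⟩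
  have hAbdd : BddBelow A := ⟨P.x 0, fun y hy => hy.1.1⟩
  set xs := sInf A with hxs
  have hxs0 : P.x 0 ≤ xs := le_csInf hAne (fun y hy => hy.1.1)
  have hxsn : xs ≤ P.x P.n := csInf_le hAbdd hxnA
  have hxsIcc : xs ∈ Set.Icc (P.x 0) (P.x P.n) := ⟨hxs0, hxsn⟩
  have F1 : ∀ y ∈ Set.Icc (P.x 0) (P.x P.n), y < xs →
      ThetaL P 0 P.n y < ThetaR P 0 P.n y := by
    intro y hy hylt
    by_contra hcon
    push_neg at hcon
    exact absurd (csInf_le hAbdd ⟨hy, hcon⟩) (not_le.mpr hylt)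
  have F2 : ∀ y ∈ Set.Icc (P.x 0) (P.x P.n), xs < y →
      ThetaR P 0 P.n y < ThetaL P 0 P.n y := by
    intro y hy hylt
    obtain ⟨a, haA, hay⟩ := exists_lt_of_csInf_lt hAne hylt
    have h1 : ThetaL P 0 P.n a < ThetaL P 0 P.n y := thetaL_strict P hw0 haA.1.1 hay hy.2
    have h2 : ThetaR P 0 P.n y < ThetaR P 0 P.n a := thetaR_strict P hwn haA.1.1 hay hy.2
    linarith [haA.2]
  -- F3 : left of xs, R y dominates both values at xs
  have F3 : ∀ y ∈ Set.Icc (P.x 0) (P.x P.n), y < xs →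
      ThetaL P 0 P.n xs < ThetaR P 0 P.n y ∧ ThetaR P 0 P.n xs < ThetaR P 0 P.n y := by
    intro y hy hylt
    have hR : ThetaR P 0 P.n xs < ThetaR P 0 P.n y := thetaR_strict P hwn hy.1 hylt hxsn
    refine ⟨?_, hR⟩
    have hx0xs : P.x 0 < xs := lt_of_le_of_lt hy.1 hylt
    obtain ⟨k, hkn, hk1, hk2⟩ : ∃ k, k ≤ P.n ∧ P.x k < xs ∧ xs ≤ P.x (k + 1) := by
      refine ⟨Nat.findGreatest (fun i => P.x i < xs) P.n, Nat.findGreatest_le _, ?_, ?_⟩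
      · exact Nat.findGreatest_spec (P := fun i => P.x i < xs) (Nat.zero_le _) hx0xs
      · by_contra h
        push_neg at h
        have h1 : P.x (Nat.findGreatest (fun i => P.x i < xs) P.n) < xs :=
          Nat.findGreatest_spec (P := fun i => P.x i < xs) (Nat.zero_le _) hx0xs
        have h2 : Nat.findGreatest (fun i => P.x i < xs) P.n ≤ P.n :=
          Nat.findGreatest_le _
        have hklt : Nat.findGreatest (fun i => P.x i < xs) P.n < P.n := by
          rcases Nat.lt_or_ge (Nat.findGreatest (fun i => P.x i < xs) P.n) P.n with hlt | hge
          · exact hlt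
          · have : Nat.findGreatest (fun i => P.x i < xs) P.n = P.n := le_antisymm h2 hge
            rw [this] at h1; linarith
        exact Nat.findGreatest_is_greatest (P := fun i => P.x i < xs)
          (Nat.lt_succ_self _) (by omega) h
    have hiff : ∀ y', P.x k < y' → y' < xs → ∀ i, i ≤ P.n →
        (P.x i < y' ↔ P.x i < xs) := by
      intro y' h1 h2 i hi
      rcases le_or_gt i k with h | h
      · have := x_le P h hkn
        constructor <;> intro _ <;> linarith
      · have := x_le P h hi
        constructor <;> intro h' <;> linarith
    set m := max y (P.x k) with hm
    have hmlt : m < xs := max_lt hylt hk1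
    set y'' := (m + xs) / 2 with hy''
    have hy''1 : m < y'' := by rw [hy'']; linarith
    have hy''2 : y'' < xs := by rw [hy'']; linarith
    have hyy'' : y < y'' := lt_of_le_of_lt (le_max_left _ _) hy''1
    have hky'' : P.x k < y'' := lt_of_le_of_lt (le_max_right _ _) hy''1
    have hy''Icc : y'' ∈ Set.Icc (P.x 0) (P.x P.n) :=
      ⟨le_trans hy.1 (le_of_lt hyy''), le_trans (le_of_lt hy''2) hxsn⟩
    have key : ThetaL P 0 P.n xs ≤ ThetaR P 0 P.n y'' := by
      apply le_of_forall_pos_le_add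
      intro ε hε
      set y' := max y'' (xs - ε / P.τ) with hy'
      have hy'1 : y'' ≤ y' := le_max_left _ _
      have hy'2 : y' < xs := max_lt hy''2 (by
        have : 0 < ε / P.τ := div_pos hε hτ
        linarith)
      have hy'k : P.x k < y' := lt_of_lt_of_le hky'' hy'1
      have hy'Icc : y' ∈ Set.Icc (P.x 0) (P.x P.n) :=
        ⟨le_trans hy''Icc.1 hy'1, le_trans (le_of_lt hy'2) hxsn⟩
      have hlip := thetaL_lip P (le_of_lt hy'2) (hiff y' hy'k hy'2)
      have hLR : ThetaL P 0 P.n y' < ThetaR P 0 P.n y' := F1 y' hy'Icc hy'2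
      have hRR : ThetaR P 0 P.n y' ≤ ThetaR P 0 P.n y'' := by
        rcases eq_or_lt_of_le hy'1 with h | h
        · rw [← h]
        · exact le_of_lt (thetaR_strict P hwn hy''Icc.1 h hy'Icc.2)
      have hεb : (xs - y') * P.τ ≤ ε := by
        have h1 : xs - ε / P.τ ≤ y' := le_max_right _ _
        have h2 : xs - y' ≤ ε / P.τ := by linarith
        calc (xs - y') * P.τ ≤ (ε / P.τ) * P.τ :=
              mul_le_mul_of_nonneg_right h2 (le_of_lt hτ)
          _ = ε := div_mul_cancel₀ ε (ne_of_gt hτ)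
      linarith
    have hlast : ThetaR P 0 P.n y'' < ThetaR P 0 P.n y :=
      thetaR_strict P hwn hy.1 hyy'' hy''Icc.2
    linarith
  -- F4 : right of xs, L y dominates both values at xs
  have F4 : ∀ y ∈ Set.Icc (P.x 0) (P.x P.n), xs < y →
      ThetaR P 0 P.n xs < ThetaL P 0 P.n y ∧ ThetaL P 0 P.n xs < ThetaL P 0 P.n y := by
    intro y hy hylt
    have hL : ThetaL P 0 P.n xs < ThetaL P 0 P.n y := thetaL_strict P hw0 hxs0 hylt hy.2
    refine ⟨?_, hL⟩
    have hxsxn : xs < P.x P.n := lt_of_lt_of_le hylt hy.2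
    obtain ⟨k, hkn, hk1, hk2⟩ : ∃ k, k ≤ P.n ∧ P.x k ≤ xs ∧ xs < P.x (k + 1) := by
      refine ⟨Nat.findGreatest (fun i => P.x i ≤ xs) P.n, Nat.findGreatest_le _, ?_, ?_⟩
      · exact Nat.findGreatest_spec (P := fun i => P.x i ≤ xs) (Nat.zero_le _) hxs0
      · by_contra h
        push_neg at h
        have h1 : P.x (Nat.findGreatest (fun i => P.x i ≤ xs) P.n) ≤ xs :=
          Nat.findGreatest_spec (P := fun i => P.x i ≤ xs) (Nat.zero_le _) hxs0
        have h2 : Nat.findGreatest (fun i => P.x i ≤ xs) P.n ≤ P.n :=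
          Nat.findGreatest_le _
        have hklt : Nat.findGreatest (fun i => P.x i ≤ xs) P.n < P.n := by
          rcases Nat.lt_or_ge (Nat.findGreatest (fun i => P.x i ≤ xs) P.n) P.n with hlt | hge
          · exact hlt
          · have : Nat.findGreatest (fun i => P.x i ≤ xs) P.n = P.n := le_antisymm h2 hge
            rw [this] at h1; linarith
        exact Nat.findGreatest_is_greatest (P := fun i => P.x i ≤ xs)
          (Nat.lt_succ_self _) (by omega) h
    have hiff : ∀ y', xs < y' → y' < P.x (k + 1) → ∀ i, i ≤ P.n →
        (xs < P.x i ↔ y' < P.x i) := by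
      intro y' h1 h2 i hi
      rcases le_or_gt i k with h | h
      · have := x_le P h hkn
        constructor <;> intro h' <;> linarith
      · have := x_le P h hi
        constructor <;> intro _ <;> linarith
    set m := min y (P.x (k + 1)) with hm
    have hmgt : xs < m := lt_min hylt hk2
    set y'' := (xs + m) / 2 with hy''
    have hy''1 : y'' < m := by rw [hy'']; linarith
    have hy''2 : xs < y'' := by rw [hy'']; linarith
    have hyy'' : y'' < y := lt_of_lt_of_le hy''1 (min_le_left _ _)
    have hky'' : y'' < P.x (k + 1) := lt_of_lt_of_le hy''1 (min_le_right _ _)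
    have hy''Icc : y'' ∈ Set.Icc (P.x 0) (P.x P.n) :=
      ⟨le_trans hxs0 (le_of_lt hy''2), le_trans (le_of_lt hyy'') hy.2⟩
    have key : ThetaR P 0 P.n xs ≤ ThetaL P 0 P.n y'' := by
      apply le_of_forall_pos_le_add
      intro ε hε
      set y' := min y'' (xs + ε / P.τ) with hy'
      have hy'1 : y' ≤ y'' := min_le_left _ _
      have hy'2 : xs < y' := lt_min hy''2 (by
        have : 0 < ε / P.τ := div_pos hε hτ
        linarith)
      have hy'k : y' < P.x (k + 1) := lt_of_le_of_lt hy'1 hky''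
      have hy'Icc : y' ∈ Set.Icc (P.x 0) (P.x P.n) :=
        ⟨le_trans hxs0 (le_of_lt hy'2), le_trans hy'1 hy''Icc.2⟩
      have hlip := thetaR_lip P (le_of_lt hy'2) (hiff y' hy'2 hy'k)
      have hRL : ThetaR P 0 P.n y' < ThetaL P 0 P.n y' := F2 y' hy'Icc hy'2
      have hLL : ThetaL P 0 P.n y' ≤ ThetaL P 0 P.n y'' := by
        rcases eq_or_lt_of_le hy'1 with h | h
        · rw [h]
        · exact le_of_lt (thetaL_strict P hw0 hy'Icc.1 h hy''Icc.2)
      have hεb : (y' - xs) * P.τ ≤ ε := by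
        have h1 : y' ≤ xs + ε / P.τ := min_le_right _ _
        have h2 : y' - xs ≤ ε / P.τ := by linarith
        calc (y' - xs) * P.τ ≤ (ε / P.τ) * P.τ :=
              mul_le_mul_of_nonneg_right h2 (le_of_lt hτ)
          _ = ε := div_mul_cancel₀ ε (ne_of_gt hτ)
      linarith
    have hlast : ThetaL P 0 P.n y'' < ThetaL P 0 P.n y :=
      thetaL_strict P hw0 hy''Icc.1 hyy'' hy.2
    linarith
  -- strict minimality away from xs
  have Hlt : ∀ y ∈ Set.Icc (P.x 0) (P.x P.n), y ≠ xs →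
      Theta P 0 P.n xs < Theta P 0 P.n y := by
    intro y hy hne
    rcases lt_or_gt_of_ne hne with h | h
    · have h1 := F1 y hy h
      obtain ⟨h2, h3⟩ := F3 y hy h
      have hTy : Theta P 0 P.n y = ThetaR P 0 P.n y := max_eq_right (le_of_lt h1)
      rw [hTy]
      exact max_lt h2 h3
    · have h1 := F2 y hy h
      obtain ⟨h2, h3⟩ := F4 y hy h
      have hTy : Theta P 0 P.n y = ThetaL P 0 P.n y := max_eq_left (le_of_lt h1)
      rw [hTy]
      exact max_lt h3 h2
  refine ⟨xs, hxsIcc, ?_, ?_, ?_, ?_, ?_, ?_⟩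
  · intro y hy
    rcases eq_or_ne y xs with h | h
    · rw [h]
    · exact le_of_lt (Hlt y hy h)
  · intro y hy hmin
    by_contra hne
    have h1 := Hlt y hy hne
    have h2 := hmin xs hxsIcc
    linarith
  · intro y hy h
    exact ⟨F1 y hy h, max_eq_right (le_of_lt (F1 y hy h))⟩
  · intro y hy h
    exact ⟨F2 y hy h, max_eq_left (le_of_lt (F2 y hy h))⟩
  · intro a ha b hb hab
    have haIcc : a ∈ Set.Icc (P.x 0) (P.x P.n) := ⟨ha.1, le_trans ha.2 hxsn⟩
    have hbIcc : b ∈ Set.Icc (P.x 0) (P.x P.n) := ⟨hb.1, le_trans hb.2 hxsn⟩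
    have haxs : a < xs := lt_of_lt_of_le hab hb.2
    have hTa : Theta P 0 P.n a = ThetaR P 0 P.n a := max_eq_right (le_of_lt (F1 a haIcc haxs))
    rcases eq_or_lt_of_le hb.2 with h | h
    · rw [h]
      exact Hlt a haIcc (ne_of_lt (h ▸ haxs))
    · have hTb : Theta P 0 P.n b = ThetaR P 0 P.n b := max_eq_right (le_of_lt (F1 b hbIcc h))
      rw [hTa, hTb]
      exact thetaR_strict P hwn ha.1 hab hbIcc.2
  · intro a ha b hb hab
    have haIcc : a ∈ Set.Icc (P.x 0) (P.x P.n) := ⟨le_trans hxs0 ha.1, ha.2⟩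
    have hbIcc : b ∈ Set.Icc (P.x 0) (P.x P.n) := ⟨le_trans hxs0 hb.1, hb.2⟩
    have hbxs : xs < b := lt_of_le_of_lt ha.1 hab
    have hTb : Theta P 0 P.n b = ThetaL P 0 P.n b := max_eq_left (le_of_lt (F2 b hbIcc hbxs))
    rcases eq_or_lt_of_le ha.1 with h | h
    · rw [← h]
      exact Hlt b hbIcc (ne_of_gt hbxs)
    · have hTa : Theta P 0 P.n a = ThetaL P 0 P.n a := max_eq_left (le_of_lt (F2 a haIcc h))
      rw [hTa, hTb]
      exact thetaL_strict P hw0 haIcc.1 hab hb.2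

end S7

/-- with `n ≥ 1`, `w_0 ≥ 1`, `w_n ≥ 1`, there is a unique
minimizer `x*` of `Θ(P,·)` on `[x_0, x_n]`; to its left `Θ_L < Θ_R` (so
`Θ = Θ_R`), to its right `Θ_L > Θ_R` (so `Θ = Θ_L`), and `Θ(P,·)` is strictly
decreasing on `[x_0, x*]` and strictly increasing on `[x*, x_n]`. -/
theorem stmt7 (P : DPath) (hn : 1 ≤ P.n) (hw0 : 1 ≤ P.w 0) (hwn : 1 ≤ P.w P.n) :
    ∃ xs ∈ Set.Icc (P.x 0) (P.x P.n),
      (∀ y ∈ Set.Icc (P.x 0) (P.x P.n), Theta P 0 P.n xs ≤ Theta P 0 P.n y) ∧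
      (∀ y ∈ Set.Icc (P.x 0) (P.x P.n),
        (∀ z ∈ Set.Icc (P.x 0) (P.x P.n), Theta P 0 P.n y ≤ Theta P 0 P.n z) →
        y = xs) ∧
      (∀ y ∈ Set.Icc (P.x 0) (P.x P.n), y < xs →
        ThetaL P 0 P.n y < ThetaR P 0 P.n y ∧ Theta P 0 P.n y = ThetaR P 0 P.n y) ∧
      (∀ y ∈ Set.Icc (P.x 0) (P.x P.n), xs < y →
        ThetaR P 0 P.n y < ThetaL P 0 P.n y ∧ Theta P 0 P.n y = ThetaL P 0 P.n y) ∧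
      StrictAntiOn (Theta P 0 P.n) (Set.Icc (P.x 0) xs) ∧
      StrictMonoOn (Theta P 0 P.n) (Set.Icc xs (P.x P.n)) := by
  exact S7.main P hn hw0 hwn
end

section
/- Let P be a dynamic path instance with n ≥ 1, w_0 ≥ 1 and w_n ≥ 1, and let x* be the unique minimizer of Θ(P,·) on [x_0, x_n]. The set { i : 0 ≤ i ≤ n and Θ_L(P,x_i) < Θ_R(P,x_i) } is nonempty and contained in {0, …, n−1}; let t be its maximum. Define Θ_L⁺ = Θ_L(P,x_{t+1}) − τ·(x_{t+1} − x_t) and Θ_R⁻ = Θ_R(P,x_t) − τ·(x_{t+1} − x_t). Then: (i) if Θ_L⁺ ≥ Θ_R(P,x_t) then x* = x_t; (ii) if Θ_L⁺ < Θ_R(P,x_t) and Θ_L(P,x_{t+1}) > Θ_R⁻, then x* = (x_t + x_{t+1})/2 + (Θ_R(P,x_t) − Θ_L(P,x_{t+1}))/(2τ), and this x* is the unique point of (x_t, x_{t+1}) at which Θ_L(P,x*) = Θ_R(P,x*); (iii) if Θ_L(P,x_{t+1}) ≤ Θ_R⁻ then x* = x_{t+1}. -/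
namespace Aux

variable (P : DPath)

lemma xmono : ∀ {i k : ℕ}, i ≤ k → k ≤ P.n → P.x i ≤ P.x k := by
  intro i k h hk
  induction k with
  | zero => simp_all
  | succ m ih =>
    rcases eq_or_lt_of_le h with h' | h'
    · exact le_of_eq (by rw [h'])
    · exact le_trans (ih (Nat.lt_succ_iff.mp h') (le_trans (Nat.le_succ m) hk))
        (le_of_lt (P.hx m (Nat.lt_of_succ_le hk)))

lemma xmono_strict {i k : ℕ} (h : i < k) (hk : k ≤ P.n) : P.x i < P.x k := by
  have h1 : P.x i ≤ P.x (k - 1) := xmono P (Nat.le_sub_one_of_lt h) (Nat.sub_le_of_le_add (le_trans hk (Nat.le_succ _)))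
  have h2 : P.x (k - 1) < P.x k := by
    have := P.hx (k - 1) (by omega)
    rwa [Nat.sub_add_cancel (by omega)] at this
  linarith

lemma x_lt_iff {i k : ℕ} (hi : i ≤ P.n) (hk : k ≤ P.n) : P.x i < P.x k ↔ i < k := by
  constructor
  · intro h; by_contra hc
    exact absurd (xmono P (Nat.le_of_not_lt hc) hi) (not_le.mpr h)
  · intro h; exact xmono_strict P h hk

/-- The defining set of ThetaL is finite, hence bounded above. -/
lemma bddL (y : ℝ) : BddAbove (insert (0:ℝ) {t : ℝ | ∃ i, 0 ≤ i ∧ i ≤ P.n ∧ P.x i < y ∧ 1 ≤ P.W 0 i ∧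
    t = (y - P.x i) * P.τ + (⌈(P.W 0 i : ℝ) / (P.cL P.n y i : ℝ)⌉ : ℝ) - 1}) := by
  apply Set.Finite.bddAbove
  apply Set.Finite.insert
  apply Set.Finite.subset (Set.Finite.image
    (fun i => (y - P.x i) * P.τ + (⌈(P.W 0 i : ℝ) / (P.cL P.n y i : ℝ)⌉ : ℝ) - 1)
    (Set.finite_Iic P.n))
  rintro t ⟨i, _, hi, _, _, ht⟩
  exact ⟨i, hi, ht.symm⟩

lemma bddR (y : ℝ) : BddAbove (insert (0:ℝ) {t : ℝ | ∃ i, 0 ≤ i ∧ i ≤ P.n ∧ y < P.x i ∧ 1 ≤ P.W i P.n ∧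
    t = (P.x i - y) * P.τ + (⌈(P.W i P.n : ℝ) / (P.cR 0 y i : ℝ)⌉ : ℝ) - 1}) := by
  apply Set.Finite.bddAbove
  apply Set.Finite.insert
  apply Set.Finite.subset (Set.Finite.image
    (fun i => (P.x i - y) * P.τ + (⌈(P.W i P.n : ℝ) / (P.cR 0 y i : ℝ)⌉ : ℝ) - 1)
    (Set.finite_Iic P.n))
  rintro t ⟨i, _, hi, _, _, ht⟩
  exact ⟨i, hi, ht.symm⟩

lemma ThetaL_nonneg (y : ℝ) : 0 ≤ ThetaL P 0 P.n y :=
  le_csSup (bddL P y) (Set.mem_insert 0 _)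

lemma ThetaR_nonneg (y : ℝ) : 0 ≤ ThetaR P 0 P.n y :=
  le_csSup (bddR P y) (Set.mem_insert 0 _)

lemma le_ThetaL {y : ℝ} {i : ℕ} (hi : i ≤ P.n) (hxi : P.x i < y) (hw : 1 ≤ P.W 0 i) :
    (y - P.x i) * P.τ + (⌈(P.W 0 i : ℝ) / (P.cL P.n y i : ℝ)⌉ : ℝ) - 1 ≤ ThetaL P 0 P.n y :=
  le_csSup (bddL P y) (Set.mem_insert_of_mem _ ⟨i, Nat.zero_le i, hi, hxi, hw, rfl⟩)

lemma le_ThetaR {y : ℝ} {i : ℕ} (hi : i ≤ P.n) (hxi : y < P.x i) (hw : 1 ≤ P.W i P.n) :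
    (P.x i - y) * P.τ + (⌈(P.W i P.n : ℝ) / (P.cR 0 y i : ℝ)⌉ : ℝ) - 1 ≤ ThetaR P 0 P.n y :=
  le_csSup (bddR P y) (Set.mem_insert_of_mem _ ⟨i, Nat.zero_le i, hi, hxi, hw, rfl⟩)

lemma ThetaL_le {y m : ℝ} (hm : 0 ≤ m)
    (h : ∀ i, i ≤ P.n → P.x i < y → 1 ≤ P.W 0 i →
      (y - P.x i) * P.τ + (⌈(P.W 0 i : ℝ) / (P.cL P.n y i : ℝ)⌉ : ℝ) - 1 ≤ m) :
    ThetaL P 0 P.n y ≤ m := by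
  apply csSup_le (Set.insert_nonempty _ _)
  rintro t (rfl | ⟨i, _, hi, hxi, hw, rfl⟩)
  · exact hm
  · exact h i hi hxi hw

lemma ThetaR_le {y m : ℝ} (hm : 0 ≤ m)
    (h : ∀ i, i ≤ P.n → y < P.x i → 1 ≤ P.W i P.n →
      (P.x i - y) * P.τ + (⌈(P.W i P.n : ℝ) / (P.cR 0 y i : ℝ)⌉ : ℝ) - 1 ≤ m) :
    ThetaR P 0 P.n y ≤ m := by
  apply csSup_le (Set.insert_nonempty _ _)
  rintro t (rfl | ⟨i, _, hi, hxi, hw, rfl⟩)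
  · exact hm
  · exact h i hi hxi hw


/-! ### capacity lemmas -/

lemma JL_nonempty {y : ℝ} {i : ℕ} (hi : i < P.n) (hxi : P.x i < y) :
    {j | i + 1 ≤ j ∧ j ≤ P.n ∧ P.x (j - 1) < y}.Nonempty :=
  ⟨i + 1, le_refl _, hi, by simpa using hxi⟩

lemma cL_mem {y : ℝ} {i : ℕ} (hi : i < P.n) (hxi : P.x i < y) :
    P.cL P.n y i ∈ P.c '' {j | i + 1 ≤ j ∧ j ≤ P.n ∧ P.x (j - 1) < y} :=
  Nat.sInf_mem ((JL_nonempty P hi hxi).image P.c)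

lemma cL_pos {y : ℝ} {i : ℕ} (hi : i < P.n) (hxi : P.x i < y) : 0 < P.cL P.n y i := by
  obtain ⟨j, ⟨h1, h2, _⟩, hj⟩ := cL_mem P hi hxi
  rw [← hj]; exact P.hc j (le_trans (Nat.le_add_left 1 i) h1) h2

lemma cL_anti {y y' : ℝ} {i : ℕ} (hi : i < P.n) (hxi : P.x i < y) (hyy : y ≤ y') :
    P.cL P.n y' i ≤ P.cL P.n y i := by
  obtain ⟨j, ⟨h1, h2, h3⟩, hj⟩ := cL_mem P hi hxi
  rw [← hj]
  exact Nat.sInf_le ⟨j, ⟨h1, h2, lt_of_lt_of_le h3 hyy⟩, rfl⟩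

lemma JR_nonempty {y : ℝ} {i : ℕ} (hi : i ≤ P.n) (h0 : P.x 0 ≤ y) (hxi : y < P.x i) :
    {j | 0 + 1 ≤ j ∧ j ≤ i ∧ y < P.x j}.Nonempty := by
  refine ⟨i, ?_, le_refl _, hxi⟩
  simp only [Nat.zero_add]
  by_contra h
  push_neg at h
  interval_cases i
  exact absurd hxi (not_lt.mpr h0)

lemma cR_mem {y : ℝ} {i : ℕ} (hi : i ≤ P.n) (h0 : P.x 0 ≤ y) (hxi : y < P.x i) :
    P.cR 0 y i ∈ P.c '' {j | 0 + 1 ≤ j ∧ j ≤ i ∧ y < P.x j} :=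
  Nat.sInf_mem ((JR_nonempty P hi h0 hxi).image P.c)

lemma cR_pos {y : ℝ} {i : ℕ} (hi : i ≤ P.n) (h0 : P.x 0 ≤ y) (hxi : y < P.x i) :
    0 < P.cR 0 y i := by
  obtain ⟨j, ⟨h1, h2, _⟩, hj⟩ := cR_mem P hi h0 hxi
  rw [← hj]; exact P.hc j h1 (le_trans h2 hi)

lemma cR_anti {y y' : ℝ} {i : ℕ} (hi : i ≤ P.n) (h0 : P.x 0 ≤ y) (hyy : y ≤ y')
    (hxi : y' < P.x i) : P.cR 0 y i ≤ P.cR 0 y' i := by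
  obtain ⟨j, ⟨h1, h2, h3⟩, hj⟩ := cR_mem P hi (le_trans h0 hyy) hxi
  rw [← hj]
  exact Nat.sInf_le ⟨j, ⟨h1, h2, lt_of_le_of_lt hyy h3⟩, rfl⟩

/-! ### ceiling lemmas -/

lemma one_le_ceil {W d : ℕ} (hW : 1 ≤ W) (hd : 0 < d) :
    (1 : ℝ) ≤ (⌈(W : ℝ) / (d : ℝ)⌉ : ℝ) := by
  have : (0 : ℝ) < (W : ℝ) / (d : ℝ) :=
    div_pos (by exact_mod_cast hW) (by exact_mod_cast hd)
  exact_mod_cast Int.ceil_pos.mpr this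

lemma ceil_mono_cap {W d d' : ℕ} (hd' : 0 < d') (hdd : d' ≤ d) :
    (⌈(W : ℝ) / (d : ℝ)⌉ : ℝ) ≤ (⌈(W : ℝ) / (d' : ℝ)⌉ : ℝ) := by
  have : (W : ℝ) / (d : ℝ) ≤ (W : ℝ) / (d' : ℝ) := by
    apply div_le_div_of_nonneg_left (by positivity) (by exact_mod_cast hd')
    exact_mod_cast hdd
  exact_mod_cast Int.ceil_le_ceil this

/-! ### term shift lemmas -/

lemma termL_shift {y y' : ℝ} {i : ℕ} (hi : i < P.n) (hxi : P.x i < y) (hyy : y ≤ y') :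
    ((y - P.x i) * P.τ + (⌈(P.W 0 i : ℝ) / (P.cL P.n y i : ℝ)⌉ : ℝ) - 1) + (y' - y) * P.τ ≤
    (y' - P.x i) * P.τ + (⌈(P.W 0 i : ℝ) / (P.cL P.n y' i : ℝ)⌉ : ℝ) - 1 := by
  have h1 := ceil_mono_cap (W := P.W 0 i)
    (cL_pos P hi (lt_of_lt_of_le hxi hyy)) (cL_anti P hi hxi hyy)
  nlinarith [P.hτ]

lemma termR_shift {y y' : ℝ} {i : ℕ} (hi : i ≤ P.n) (h0 : P.x 0 ≤ y) (hyy : y ≤ y')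
    (hxi : y' < P.x i) :
    ((P.x i - y') * P.τ + (⌈(P.W i P.n : ℝ) / (P.cR 0 y' i : ℝ)⌉ : ℝ) - 1) + (y' - y) * P.τ ≤
    (P.x i - y) * P.τ + (⌈(P.W i P.n : ℝ) / (P.cR 0 y i : ℝ)⌉ : ℝ) - 1 := by
  have h1 := ceil_mono_cap (W := P.W i P.n)
    (cR_pos P hi h0 (lt_of_le_of_lt hyy hxi)) (cR_anti P hi h0 hyy hxi)
  nlinarith [P.hτ]

/-! ### cell (same-segment) equalities -/

lemma cL_cell {y y' : ℝ} {t i : ℕ} (ht : t + 1 ≤ P.n) (hit : i ≤ t)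
    (hy1 : P.x t < y) (hyy : y ≤ y') (hy2 : y' ≤ P.x (t + 1)) :
    P.cL P.n y i = P.cL P.n y' i := by
  have hset : {j | i + 1 ≤ j ∧ j ≤ P.n ∧ P.x (j - 1) < y} =
      {j | i + 1 ≤ j ∧ j ≤ P.n ∧ P.x (j - 1) < y'} := by
    ext j
    simp only [Set.mem_setOf_eq]
    constructor
    · rintro ⟨h1, h2, h3⟩
      exact ⟨h1, h2, lt_of_lt_of_le h3 hyy⟩
    · rintro ⟨h1, h2, h3⟩
      refine ⟨h1, h2, ?_⟩
      have hxj : P.x (j - 1) < P.x (t + 1) := lt_of_lt_of_le h3 hy2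
      have hjt : j - 1 < t + 1 := (x_lt_iff P (le_trans (Nat.sub_le j 1) h2) ht).mp hxj
      have : P.x (j - 1) ≤ P.x t := xmono P (by omega) (by omega)
      linarith
  unfold DPath.cL
  rw [hset]

lemma termL_cell {y y' : ℝ} {t i : ℕ} (ht : t + 1 ≤ P.n) (hit : i ≤ t)
    (hy1 : P.x t < y) (hyy : y ≤ y') (hy2 : y' ≤ P.x (t + 1)) :
    (y' - P.x i) * P.τ + (⌈(P.W 0 i : ℝ) / (P.cL P.n y' i : ℝ)⌉ : ℝ) - 1 =
    ((y - P.x i) * P.τ + (⌈(P.W 0 i : ℝ) / (P.cL P.n y i : ℝ)⌉ : ℝ) - 1) + (y' - y) * P.τ := by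
  rw [cL_cell P ht hit hy1 hyy hy2]; ring

lemma cR_cell {y y' : ℝ} {t i : ℕ} (ht : t + 1 ≤ P.n) (hit : t + 1 ≤ i) (hin : i ≤ P.n)
    (hy1 : P.x t ≤ y) (hyy : y ≤ y') (hy2 : y' < P.x (t + 1)) :
    P.cR 0 y i = P.cR 0 y' i := by
  have hset : {j | 0 + 1 ≤ j ∧ j ≤ i ∧ y < P.x j} =
      {j | 0 + 1 ≤ j ∧ j ≤ i ∧ y' < P.x j} := by
    ext j
    simp only [Set.mem_setOf_eq]
    constructor
    · rintro ⟨h1, h2, h3⟩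
      refine ⟨h1, h2, ?_⟩
      have hxj : P.x t < P.x j := lt_of_le_of_lt hy1 h3
      have hjt : t < j := (x_lt_iff P (by omega) (le_trans h2 hin)).mp hxj
      have : P.x (t + 1) ≤ P.x j := xmono P (by omega) (le_trans h2 hin)
      linarith
    · rintro ⟨h1, h2, h3⟩
      exact ⟨h1, h2, lt_of_le_of_lt hyy h3⟩
  unfold DPath.cR
  rw [hset]

lemma termR_cell {y y' : ℝ} {t i : ℕ} (ht : t + 1 ≤ P.n) (hit : t + 1 ≤ i) (hin : i ≤ P.n)
    (hy1 : P.x t ≤ y) (hyy : y ≤ y') (hy2 : y' < P.x (t + 1)) :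
    (P.x i - y) * P.τ + (⌈(P.W i P.n : ℝ) / (P.cR 0 y i : ℝ)⌉ : ℝ) - 1 =
    ((P.x i - y') * P.τ + (⌈(P.W i P.n : ℝ) / (P.cR 0 y' i : ℝ)⌉ : ℝ) - 1) + (y' - y) * P.τ := by
  rw [cR_cell P ht hit hin hy1 hyy hy2]; ring


/-! ### weights -/

lemma W_left {i : ℕ} (hw0 : 1 ≤ P.w 0) : 1 ≤ P.W 0 i :=
  le_trans hw0 (Finset.single_le_sum (f := P.w) (fun _ _ => Nat.zero_le _)
    (Finset.mem_Icc.mpr ⟨le_refl 0, Nat.zero_le i⟩))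

lemma W_right {i : ℕ} (hi : i ≤ P.n) (hwn : 1 ≤ P.w P.n) : 1 ≤ P.W i P.n :=
  le_trans hwn (Finset.single_le_sum (f := P.w) (fun _ _ => Nat.zero_le _)
    (Finset.mem_Icc.mpr ⟨hi, le_refl _⟩))

/-! ### boundary values -/

lemma ThetaL_x0 : ThetaL P 0 P.n (P.x 0) = 0 := by
  refine le_antisymm (ThetaL_le P (le_refl 0) ?_) (ThetaL_nonneg P _)
  intro i hi hxi _
  exact absurd (xmono P (Nat.zero_le i) hi) (not_le.mpr hxi)

lemma ThetaR_xn : ThetaR P 0 P.n (P.x P.n) = 0 := by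
  refine le_antisymm (ThetaR_le P (le_refl 0) ?_) (ThetaR_nonneg P _)
  intro i hi hxi _
  exact absurd (xmono P hi (le_refl _)) (not_le.mpr hxi)

/-! ### lower bounds -/

lemma L_lb (hn : 1 ≤ P.n) (hw0 : 1 ≤ P.w 0) {y : ℝ} (hy : P.x 0 < y) :
    (y - P.x 0) * P.τ ≤ ThetaL P 0 P.n y := by
  have h1 := le_ThetaL P (Nat.zero_le P.n) hy (W_left P hw0)
  have h2 := one_le_ceil (W := P.W 0 0) (W_left P hw0) (cL_pos P hn hy)
  linarith

lemma R_lb (hwn : 1 ≤ P.w P.n) {y : ℝ} (h0 : P.x 0 ≤ y) (hy : y < P.x P.n) :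
    (P.x P.n - y) * P.τ ≤ ThetaR P 0 P.n y := by
  have h1 := le_ThetaR P (le_refl P.n) hy (W_right P (le_refl _) hwn)
  have h2 := one_le_ceil (W := P.W P.n P.n) (W_right P (le_refl _) hwn)
    (cR_pos P (le_refl _) h0 hy)
  linarith

/-! ### global shift inequalities -/

lemma L_shift (hn : 1 ≤ P.n) (hw0 : 1 ≤ P.w 0) {y y' : ℝ}
    (h0 : P.x 0 ≤ y) (hyy : y ≤ y') (hyn : y' ≤ P.x P.n) :
    ThetaL P 0 P.n y + (y' - y) * P.τ ≤ ThetaL P 0 P.n y' := by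
  rcases eq_or_lt_of_le hyy with rfl | hlt
  · simp
  have hm : 0 ≤ ThetaL P 0 P.n y' - (y' - y) * P.τ := by
    have := L_lb P hn hw0 (lt_of_le_of_lt h0 hlt)
    nlinarith [P.hτ]
  have := ThetaL_le P hm (y := y) (fun i hi hxi hw => by
    have hin : i < P.n := by
      rcases eq_or_lt_of_le hi with rfl | h
      · exact absurd (le_trans (le_of_lt hlt) hyn) (not_le.mpr hxi)
      · exact h
    have h1 := termL_shift P hin hxi hyy
    have h2 := le_ThetaL P hi (lt_trans hxi hlt) hw
    linarith)
  linarith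

lemma R_shift (hwn : 1 ≤ P.w P.n) {y y' : ℝ}
    (h0 : P.x 0 ≤ y) (hyy : y ≤ y') (hyn : y' ≤ P.x P.n) :
    ThetaR P 0 P.n y' + (y' - y) * P.τ ≤ ThetaR P 0 P.n y := by
  rcases eq_or_lt_of_le hyy with rfl | hlt
  · simp
  have hm : 0 ≤ ThetaR P 0 P.n y - (y' - y) * P.τ := by
    have := R_lb P hwn h0 (lt_of_lt_of_le hlt hyn)
    nlinarith [P.hτ]
  have := ThetaR_le P hm (y := y') (fun i hi hxi hw => by
    have h1 := termR_shift P hi h0 hyy hxi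
    have h2 := le_ThetaR P hi (lt_of_lt_of_le hlt (le_of_lt hxi)) hw
    linarith)
  linarith

/-! ### cell equalities for Theta -/

lemma L_cell (hn : 1 ≤ P.n) (hw0 : 1 ≤ P.w 0) {y y' : ℝ} {t : ℕ} (ht : t + 1 ≤ P.n)
    (hy1 : P.x t < y) (hyy : y ≤ y') (hy2 : y' ≤ P.x (t + 1)) :
    ThetaL P 0 P.n y' = ThetaL P 0 P.n y + (y' - y) * P.τ := by
  have h0 : P.x 0 ≤ y := le_of_lt (lt_of_le_of_lt (xmono P (Nat.zero_le t) (by omega)) hy1)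
  have hyn : y' ≤ P.x P.n := le_trans hy2 (xmono P ht (le_refl _))
  refine le_antisymm ?_ (L_shift P hn hw0 h0 hyy hyn)
  have hm : 0 ≤ ThetaL P 0 P.n y + (y' - y) * P.τ := by
    have h1 := ThetaL_nonneg P y
    nlinarith [P.hτ]
  apply ThetaL_le P hm
  intro i hi hxi hw
  have hit : i ≤ t := by
    have : i < t + 1 := (x_lt_iff P hi ht).mp (lt_of_lt_of_le hxi hy2)
    omega
  have hxiy : P.x i < y := lt_of_le_of_lt (xmono P hit (by omega)) hy1
  have h1 := termL_cell P ht hit hy1 hyy hy2 (i := i)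
  have h2 := le_ThetaL P hi hxiy hw
  linarith

lemma R_cell (hwn : 1 ≤ P.w P.n) {y y' : ℝ} {t : ℕ} (ht : t + 1 ≤ P.n)
    (hy1 : P.x t ≤ y) (hyy : y ≤ y') (hy2 : y' < P.x (t + 1)) :
    ThetaR P 0 P.n y = ThetaR P 0 P.n y' + (y' - y) * P.τ := by
  have h0 : P.x 0 ≤ y := le_trans (xmono P (Nat.zero_le t) (by omega)) hy1
  have hyn : y' ≤ P.x P.n := le_of_lt (lt_of_lt_of_le hy2 (xmono P ht (le_refl _)))
  refine le_antisymm ?_ (R_shift P hwn h0 hyy hyn)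
  have hm : 0 ≤ ThetaR P 0 P.n y' + (y' - y) * P.τ := by
    have h1 := ThetaR_nonneg P y'
    nlinarith [P.hτ]
  apply ThetaR_le P hm
  intro i hi hxi hw
  have hit : t + 1 ≤ i := by
    have : t < i := (x_lt_iff P (by omega) hi).mp (lt_of_le_of_lt hy1 hxi)
    omega
  have hxiy : y' < P.x i := lt_of_lt_of_le hy2 (xmono P hit hi)
  have h1 := termR_cell P ht hit hi hy1 hyy hy2 (i := i)
  have h2 := le_ThetaR P hi hxiy hw
  linarith

end Aux

set_option maxHeartbeats 2000000 in
/-- locating the unique minimizer `x*` from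
`t = max { i ≤ n : Θ_L(P,x_i) < Θ_R(P,x_i) }` via the three cases. -/
theorem stmt8 (P : DPath) (hn : 1 ≤ P.n) (hw0 : 1 ≤ P.w 0) (hwn : 1 ≤ P.w P.n)
    (xs : ℝ) (hxs : xs ∈ Set.Icc (P.x 0) (P.x P.n))
    (hmin : ∀ y ∈ Set.Icc (P.x 0) (P.x P.n), Theta P 0 P.n xs ≤ Theta P 0 P.n y) :
    -- the set { i ≤ n : Θ_L(P,x_i) < Θ_R(P,x_i) } is nonempty
    (∃ i, i ≤ P.n ∧ ThetaL P 0 P.n (P.x i) < ThetaR P 0 P.n (P.x i)) ∧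
    -- and contained in {0, …, n−1}
    (∀ i, i ≤ P.n → ThetaL P 0 P.n (P.x i) < ThetaR P 0 P.n (P.x i) → i < P.n) ∧
    -- and for t its maximum, the three cases hold:
    (∀ t, t ≤ P.n → ThetaL P 0 P.n (P.x t) < ThetaR P 0 P.n (P.x t) →
      (∀ i, i ≤ P.n → ThetaL P 0 P.n (P.x i) < ThetaR P 0 P.n (P.x i) → i ≤ t) →
      -- (i)
      ((ThetaL P 0 P.n (P.x (t + 1)) - P.τ * (P.x (t + 1) - P.x t) ≥
          ThetaR P 0 P.n (P.x t) → xs = P.x t) ∧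
      -- (ii)
      (ThetaL P 0 P.n (P.x (t + 1)) - P.τ * (P.x (t + 1) - P.x t) <
          ThetaR P 0 P.n (P.x t) →
        ThetaR P 0 P.n (P.x t) - P.τ * (P.x (t + 1) - P.x t) <
          ThetaL P 0 P.n (P.x (t + 1)) →
        xs = (P.x t + P.x (t + 1)) / 2 +
              (ThetaR P 0 P.n (P.x t) - ThetaL P 0 P.n (P.x (t + 1))) / (2 * P.τ) ∧
        P.x t < xs ∧ xs < P.x (t + 1) ∧
        ThetaL P 0 P.n xs = ThetaR P 0 P.n xs ∧
        (∀ z, P.x t < z → z < P.x (t + 1) →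
          ThetaL P 0 P.n z = ThetaR P 0 P.n z → z = xs)) ∧
      -- (iii)
      (ThetaL P 0 P.n (P.x (t + 1)) ≤
          ThetaR P 0 P.n (P.x t) - P.τ * (P.x (t + 1) - P.x t) →
        xs = P.x (t + 1)))) := by
  have hτ := P.hτ
  have hsub : ∀ i, i ≤ P.n → ThetaL P 0 P.n (P.x i) < ThetaR P 0 P.n (P.x i) → i < P.n := by
    intro i hi h
    rcases eq_or_lt_of_le hi with rfl | h'
    · rw [Aux.ThetaR_xn] at h
      exact absurd (Aux.ThetaL_nonneg P _) (not_le.mpr h)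
    · exact h'
  have hx0n : P.x 0 < P.x P.n := Aux.xmono_strict P hn (le_refl _)
  refine ⟨⟨0, Nat.zero_le _, ?_⟩, hsub, ?_⟩
  · rw [Aux.ThetaL_x0]
    have := Aux.R_lb P hwn (le_refl _) hx0n
    nlinarith [mul_pos (sub_pos.mpr hx0n) hτ]
  intro t htn htLR htmax
  have htn' : t < P.n := hsub t htn htLR
  have ht1 : t + 1 ≤ P.n := htn'
  have hxt1 : P.x t < P.x (t + 1) := P.hx t htn'
  have hx0t : P.x 0 ≤ P.x t := Aux.xmono P (Nat.zero_le t) (by omega)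
  have hxtn : P.x t ≤ P.x P.n := Aux.xmono P (by omega) (le_refl _)
  have hx0t1 : P.x 0 ≤ P.x (t + 1) := Aux.xmono P (Nat.zero_le _) ht1
  have hxt1n : P.x (t + 1) ≤ P.x P.n := Aux.xmono P ht1 (le_refl _)
  have hR1L1 : ThetaR P 0 P.n (P.x (t + 1)) ≤ ThetaL P 0 P.n (P.x (t + 1)) := by
    by_contra h
    push_neg at h
    have := htmax (t + 1) ht1 h
    omega
  have hkey : ∀ z, z ∈ Set.Icc (P.x 0) (P.x P.n) →
      (∀ y, y ∈ Set.Icc (P.x 0) (P.x P.n) → y ≠ z → Theta P 0 P.n z < Theta P 0 P.n y) →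
      xs = z := by
    intro z hz hstrict
    by_contra hne
    exact absurd (hmin z hz) (not_le.mpr (hstrict xs hxs hne))
  have hL01 : ThetaL P 0 P.n (P.x t) + (P.x (t + 1) - P.x t) * P.τ ≤
      ThetaL P 0 P.n (P.x (t + 1)) :=
    Aux.L_shift P hn hw0 hx0t (le_of_lt hxt1) hxt1n
  have hR10 : ThetaR P 0 P.n (P.x (t + 1)) + (P.x (t + 1) - P.x t) * P.τ ≤
      ThetaR P 0 P.n (P.x t) :=
    Aux.R_shift P hwn hx0t (le_of_lt hxt1) hxt1n
  have hmidL : ∀ y, P.x t < y → y ≤ P.x (t + 1) →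
      ThetaL P 0 P.n y = ThetaL P 0 P.n (P.x (t + 1)) - (P.x (t + 1) - y) * P.τ := by
    intro y hy1 hy2
    have := Aux.L_cell P hn hw0 ht1 hy1 hy2 (le_refl _)
    linarith
  have hmidR : ∀ y, P.x t ≤ y → y < P.x (t + 1) →
      ThetaR P 0 P.n y = ThetaR P 0 P.n (P.x t) - (y - P.x t) * P.τ := by
    intro y hy1 hy2
    have := Aux.R_cell P hwn ht1 (le_refl _) hy1 hy2
    linarith
  have hfar_left : ∀ y, P.x 0 ≤ y → y < P.x t →
      ThetaR P 0 P.n (P.x t) < ThetaR P 0 P.n y := by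
    intro y hy1 hy2
    have := Aux.R_shift P hwn hy1 (le_of_lt hy2) hxtn
    nlinarith [mul_pos (sub_pos.mpr hy2) hτ]
  have hfar_right : ∀ y, P.x (t + 1) < y → y ≤ P.x P.n →
      ThetaL P 0 P.n (P.x (t + 1)) < ThetaL P 0 P.n y := by
    intro y hy1 hy2
    have := Aux.L_shift P hn hw0 hx0t1 (le_of_lt hy1) hy2
    nlinarith [mul_pos (sub_pos.mpr hy1) hτ]
  refine ⟨?_, ?_, ?_⟩
  -- Case (i)
  · intro hge
    apply hkey (P.x t) ⟨hx0t, hxtn⟩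
    intro y hy hne
    have hTt : Theta P 0 P.n (P.x t) = ThetaR P 0 P.n (P.x t) :=
      max_eq_right (le_of_lt htLR)
    rw [hTt]
    rcases lt_or_gt_of_ne hne with hlt | hgt
    · exact lt_of_lt_of_le (hfar_left y hy.1 hlt) (le_max_right _ _)
    · have hLy : ThetaR P 0 P.n (P.x t) < ThetaL P 0 P.n y := by
        rcases le_or_gt y (P.x (t + 1)) with h | h
        · rw [hmidL y hgt h]
          nlinarith [mul_pos (sub_pos.mpr hgt) hτ]
        · have := hfar_right y h hy.2
          nlinarith [mul_pos (sub_pos.mpr hxt1) hτ]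
      exact lt_of_lt_of_le hLy (le_max_left _ _)
  -- Case (ii)
  · intro h1 h2
    set z := (P.x t + P.x (t + 1)) / 2 +
        (ThetaR P 0 P.n (P.x t) - ThetaL P 0 P.n (P.x (t + 1))) / (2 * P.τ) with hzdef
    have hz3 : z * (2 * P.τ) =
        (ThetaR P 0 P.n (P.x t) - ThetaL P 0 P.n (P.x (t + 1))) +
        (P.x t + P.x (t + 1)) * P.τ := by
      rw [hzdef]
      field_simp
      ring
    have hzt : P.x t < z := by
      by_contra hc
      push_neg at hc
      nlinarith [mul_nonneg (sub_nonneg.mpr hc) (le_of_lt hτ)]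
    have hz1 : z < P.x (t + 1) := by
      by_contra hc
      push_neg at hc
      nlinarith [mul_nonneg (sub_nonneg.mpr hc) (le_of_lt hτ)]
    have hLz : ThetaL P 0 P.n z = ThetaL P 0 P.n (P.x (t + 1)) - (P.x (t + 1) - z) * P.τ :=
      hmidL z hzt (le_of_lt hz1)
    have hRz : ThetaR P 0 P.n z = ThetaR P 0 P.n (P.x t) - (z - P.x t) * P.τ :=
      hmidR z (le_of_lt hzt) hz1
    have hLRz : ThetaL P 0 P.n z = ThetaR P 0 P.n z := by
      rw [hLz, hRz]
      linear_combination hz3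
    have hzIcc : z ∈ Set.Icc (P.x 0) (P.x P.n) :=
      ⟨le_of_lt (lt_of_le_of_lt hx0t hzt), le_of_lt (lt_of_lt_of_le hz1 hxt1n)⟩
    have hxsz : xs = z := by
      apply hkey z hzIcc
      intro y hy hne
      rcases lt_or_gt_of_ne hne with hlt | hgt
      · have hTz : Theta P 0 P.n z = ThetaR P 0 P.n z := max_eq_right (le_of_eq hLRz)
        rw [hTz]
        have hRy : ThetaR P 0 P.n z < ThetaR P 0 P.n y := by
          rcases le_or_gt (P.x t) y with h | h
          · rw [hmidR y h (lt_trans hlt hz1), hRz]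
            nlinarith [mul_pos (sub_pos.mpr hlt) hτ]
          · have := hfar_left y hy.1 h
            rw [hRz]
            nlinarith [mul_pos (sub_pos.mpr hzt) hτ]
        exact lt_of_lt_of_le hRy (le_max_right _ _)
      · have hTz : Theta P 0 P.n z = ThetaL P 0 P.n z := max_eq_left (ge_of_eq hLRz)
        rw [hTz]
        have hLy : ThetaL P 0 P.n z < ThetaL P 0 P.n y := by
          rcases le_or_gt y (P.x (t + 1)) with h | h
          · rw [hmidL y (lt_trans hzt hgt) h, hLz]
            nlinarith [mul_pos (sub_pos.mpr hgt) hτ]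
          · have := hfar_right y h hy.2
            rw [hLz]
            nlinarith [mul_pos (sub_pos.mpr hz1) hτ]
        exact lt_of_lt_of_le hLy (le_max_left _ _)
    refine ⟨hxsz, by rw [hxsz]; exact hzt, by rw [hxsz]; exact hz1,
      by rw [hxsz]; exact hLRz, ?_⟩
    intro z' hz'1 hz'2 heq
    rw [hxsz]
    have hLz' := hmidL z' hz'1 (le_of_lt hz'2)
    have hRz' := hmidR z' (le_of_lt hz'1) hz'2
    rw [hLz', hRz'] at heq
    have hdiff : (z' - z) * (2 * P.τ) = 0 := by linear_combination heq - hz3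
    rcases mul_eq_zero.mp hdiff with h | h
    · exact sub_eq_zero.mp h
    · exact absurd h (by positivity)
  -- Case (iii)
  · intro hle
    apply hkey (P.x (t + 1)) ⟨hx0t1, hxt1n⟩
    intro y hy hne
    have hTt : Theta P 0 P.n (P.x (t + 1)) = ThetaL P 0 P.n (P.x (t + 1)) :=
      max_eq_left hR1L1
    rw [hTt]
    rcases lt_or_gt_of_ne hne with hlt | hgt
    · have hRy : ThetaL P 0 P.n (P.x (t + 1)) < ThetaR P 0 P.n y := by
        rcases le_or_gt (P.x t) y with h | h
        · rw [hmidR y h hlt]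
          nlinarith [mul_pos (sub_pos.mpr hlt) hτ]
        · have := hfar_left y hy.1 h
          nlinarith [mul_pos (sub_pos.mpr hxt1) hτ]
      exact lt_of_lt_of_le hRy (le_max_right _ _)
    · exact lt_of_lt_of_le (hfar_right y hgt hy.2) (le_max_left _ _)
end
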